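/- arXiv:1709.05124 — 6 statements merged into one kernel-verified Lean document; each statement's English description precedes it below -/
import Mathlib

section
/- If a, b ∈ C are linearly independent over R, f : D → C is holomorphic on the unit disc D, and both af and bf admit boundary measures (i.e., there exist real Borel measures μ, ν on T such that Re(af) and Re(bf) are the Poisson integrals of μ and ν respectively), then f belongs to the Hardy space H^1(D, C). -/
open Complex MeasureTheory Metric Filter

noncomputable section

instance : Fact ((0 : ℝ) < 2 * Real.pi) := ⟨by positivity⟩

/-- The unit circle `𝕋`, modelled as `ℝ / 2πℤ`, carrying its Lebesgue (arc-length)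
measure `volume` of total mass `2π`. -/
abbrev UnitCircle := AddCircle (2 * Real.pi)

/-- The canonical identification of `ℝ / 2πℤ` with the unit circle in `ℂ`, `θ ↦ e^{iθ}`. -/
def ePt : UnitCircle → ℂ :=
  Function.Periodic.lift (f := fun θ : ℝ => Complex.exp ((θ : ℂ) * Complex.I))
    (by intro x; simp [add_mul, Complex.exp_add, Complex.exp_two_pi_mul_I])

/-- Integration of a real function against a signed (real Borel) measure, via the Jordan
decomposition. -/
def sInt (μ : SignedMeasure UnitCircle) (f : UnitCircle → ℝ) : ℝ :=
  (∫ x, f x ∂μ.toJordanDecomposition.posPart) - ∫ x, f x ∂μ.toJordanDecomposition.negPart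

/-- The Poisson kernel `(1 - |λ|²)/|ζ - λ|²` for `λ ∈ 𝔻`, `ζ ∈ 𝕋`. -/
def poissonKer (l : ℂ) (ζ : UnitCircle) : ℝ :=
  (1 - ‖l‖ ^ 2) / ‖ePt ζ - l‖ ^ 2

/-- A holomorphic function `g` on the unit disc admits the boundary measure `μ` if `Re g` is
the Poisson integral of `μ`. -/
def HasBoundaryMeasure (g : ℂ → ℂ) (μ : SignedMeasure UnitCircle) : Prop :=
  ∀ l ∈ ball (0 : ℂ) 1, (g l).re = (1 / (2 * Real.pi)) * sInt μ (poissonKer l)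

/-- The point `e^{iθ}` on the unit circle (as a complex number). -/
def circlePt (θ : ℝ) : ℂ := Complex.exp ((θ : ℂ) * Complex.I)

/-- Membership in the classical Hardy space `H¹` of the unit disc: the integral means on
circles of radius `r < 1` are uniformly bounded. -/
def HardyH1Bound (f : ℂ → ℂ) : Prop :=
  ∃ C : ℝ, ∀ r ∈ Set.Ico (0 : ℝ) 1,
    (∫ θ in (0 : ℝ)..(2 * Real.pi), ‖f ((r : ℂ) * circlePt θ)‖) ≤ C

lemma ePt_coe (θ : ℝ) : ePt (θ : UnitCircle) = circlePt θ := rfl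

lemma abs_circlePt (θ : ℝ) : ‖circlePt θ‖ = 1 := by
  simp [circlePt, Complex.norm_exp]

lemma abs_ePt (ζ : UnitCircle) : ‖ePt ζ‖ = 1 := by
  induction ζ using QuotientAddGroup.induction_on with
  | H θ => rw [ePt_coe]; exact abs_circlePt θ

lemma continuous_ePt : Continuous ePt := by
  have : Continuous fun θ : ℝ => Complex.exp ((θ : ℂ) * Complex.I) := by fun_prop
  exact continuous_coinduced_dom.mpr this

lemma continuous_circlePt : Continuous circlePt := by
  unfold circlePt; fun_prop

lemma abs_r_circlePt (r θ : ℝ) (hr0 : 0 ≤ r) : ‖(r:ℂ) * circlePt θ‖ = r := by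
  rw [norm_mul, abs_circlePt, mul_one, Complex.norm_real, Real.norm_eq_abs, _root_.abs_of_nonneg hr0]

lemma sub_ne (r θ : ℝ) (hr0 : 0 ≤ r) (hr1 : r < 1) (ζ : UnitCircle) :
    ePt ζ - (r:ℂ) * circlePt θ ≠ 0 := by
  intro h
  rw [sub_eq_zero] at h
  have h2 := abs_r_circlePt r θ hr0
  rw [← h, abs_ePt] at h2
  rw [← h2] at hr1
  exact lt_irrefl 1 hr1

lemma poissonKer_nonneg (l : ℂ) (hl : ‖l‖ ≤ 1) (ζ : UnitCircle) :
    0 ≤ poissonKer l ζ := by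
  apply div_nonneg _ (by positivity)
  nlinarith [norm_nonneg l]

lemma poissonKer_le (r θ : ℝ) (hr0 : 0 ≤ r) (hr1 : r < 1) (ζ : UnitCircle) :
    poissonKer ((r:ℂ) * circlePt θ) ζ ≤ (1 - r)⁻¹ ^ 2 := by
  have hub : 1 - r ≤ ‖ePt ζ - (r:ℂ) * circlePt θ‖ := by
    have := abs_norm_sub_norm_le (ePt ζ) ((r:ℂ) * circlePt θ)
    simp only [abs_ePt, abs_r_circlePt r θ hr0] at this
    calc 1 - r ≤ |1 - r| := le_abs_self _
    _ ≤ _ := this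
  have hd : 0 < ‖ePt ζ - (r:ℂ) * circlePt θ‖ :=
    norm_pos_iff.mpr (sub_ne r θ hr0 hr1 ζ)
  rw [poissonKer, abs_r_circlePt r θ hr0]
  rw [div_le_iff₀ (pow_pos hd 2)]
  have h1 : (1 - r)^2 ≤ ‖ePt ζ - (r:ℂ) * circlePt θ‖ ^ 2 := by
    apply sq_le_sq' (by nlinarith) hub
  calc 1 - r^2 ≤ 1 := by nlinarith
  _ = (1-r)⁻¹^2 * (1-r)^2 := by
      rw [← mul_pow, inv_mul_cancel₀ (by linarith : (1:ℝ)-r ≠ 0), one_pow]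
  _ ≤ _ := by
      apply mul_le_mul_of_nonneg_left h1 (by positivity)

lemma integrable_poisson_prod (ρ : Measure UnitCircle) [IsFiniteMeasure ρ]
    (r : ℝ) (hr0 : 0 ≤ r) (hr1 : r < 1) :
    Integrable (fun p : ℝ × UnitCircle => poissonKer ((r:ℂ) * circlePt p.1) p.2)
      ((volume.restrict (Set.Ioc (0:ℝ) (2*Real.pi))).prod ρ) := by
  have hcont : Continuous fun p : ℝ × UnitCircle => poissonKer ((r:ℂ) * circlePt p.1) p.2 := by
    apply Continuous.div
    · apply Continuous.sub continuous_const
      exact (continuous_norm.comp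
        (continuous_const.mul (continuous_circlePt.comp continuous_fst))).pow 2
    · apply Continuous.pow
      apply continuous_norm.comp
      exact ((continuous_ePt.comp continuous_snd).sub
        (continuous_const.mul (continuous_circlePt.comp continuous_fst)))
    · intro p
      exact pow_ne_zero 2 (norm_ne_zero_iff.mpr (sub_ne r p.1 hr0 hr1 p.2))
  haveI : IsFiniteMeasure (volume.restrict (Set.Ioc (0:ℝ) (2*Real.pi))) := by
    constructor
    rw [Measure.restrict_apply MeasurableSet.univ, Set.univ_inter, Real.volume_Ioc]
    exact ENNReal.ofReal_lt_top
  apply Integrable.mono' (integrable_const ((1 - r)⁻¹ ^ 2)) hcont.aestronglyMeasurable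
  filter_upwards with p
  rw [Real.norm_eq_abs, _root_.abs_of_nonneg
    (poissonKer_nonneg _ (by rw [abs_r_circlePt r p.1 hr0]; exact le_of_lt hr1) _)]
  exact poissonKer_le r p.1 hr0 hr1 p.2
-- real part identity
lemma re_herglotz (w l : ℂ) (hw : ‖w‖ = 1) (hl : ‖l‖ < 1) :
    (((w + l) / (w - l)).re) = (1 - ‖l‖ ^ 2) / ‖w - l‖ ^ 2 := by
  have hne : w - l ≠ 0 := by
    intro h
    rw [sub_eq_zero] at h
    rw [h] at hw; rw [hw] at hl; exact lt_irrefl 1 hl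
  have hns : Complex.normSq (w - l) ≠ 0 := by
    simpa [Complex.normSq_eq_zero] using hne
  have hw2 : w.re ^ 2 + w.im ^ 2 = 1 := by
    have := Complex.sq_norm w
    rw [hw] at this
    rw [Complex.normSq_apply] at this; nlinarith [this]
  rw [Complex.div_re, Complex.sq_norm l, Complex.sq_norm (w - l)]
  simp only [Complex.sq_norm, Complex.normSq_apply] at hns ⊢
  simp only [Complex.add_re, Complex.add_im, Complex.sub_re, Complex.sub_im] at hns ⊢
  field_simp
  rw [div_left_inj' (by simpa [sq] using hns)]
  nlinarith [hw2]

lemma integral_herglotz (w : ℂ) (hw : ‖w‖ = 1) (r : ℝ) (hr0 : 0 < r) (hr1 : r < 1) :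
    ∫ θ in (0:ℝ)..(2*Real.pi), ((w + (r : ℂ) * circlePt θ) / (w - (r : ℂ) * circlePt θ))
      = 2 * Real.pi := by
  set g : ℂ → ℂ := fun z => (w + z) / (w - z) with hg
  have hne : ∀ z : ℂ, ‖z‖ ≤ r → w - z ≠ 0 := by
    intro z hz h
    rw [sub_eq_zero] at h
    rw [← h, hw] at hz
    exact absurd (lt_of_le_of_lt hz hr1) (lt_irrefl 1)
  have hcont : ContinuousOn g (closedBall (0:ℂ) r) := by
    apply ContinuousOn.div (by fun_prop) (by fun_prop)
    intro z hz
    exact hne z (by simpa using mem_closedBall_zero_iff.mp hz)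
  have hdiff : DiffContOnCl ℂ g (ball (0:ℂ) r) := by
    constructor
    · apply DifferentiableOn.div (by fun_prop) (by fun_prop)
      intro z hz
      exact hne z (le_of_lt (by simpa using mem_ball_zero_iff.mp hz))
    · exact hcont.mono (closure_ball_subset_closedBall)
  have h0 : (0:ℂ) ∈ ball (0:ℂ) r := by simpa using hr0
  have hC := hdiff.circleIntegral_sub_inv_smul h0
  simp only [circleIntegral, deriv_circleMap, smul_eq_mul] at hC
  have hsimp : ∀ θ : ℝ, circleMap 0 r θ * I * ((circleMap 0 r θ - 0)⁻¹ * g (circleMap 0 r θ))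
      = I * g (circleMap 0 r θ) := by
    intro θ
    have : circleMap 0 r θ ≠ 0 := circleMap_ne_center (ne_of_gt hr0)
    field_simp
    ring
  rw [intervalIntegral.integral_congr (fun θ _ => hsimp θ)] at hC
  rw [intervalIntegral.integral_const_mul] at hC
  have hwne : w ≠ 0 := by simpa [sub_zero] using hne 0 (by simp [le_of_lt hr0])
  have hg0 : g 0 = 1 := by simp [hg, div_self hwne]
  rw [hg0, mul_one] at hC
  have hX : (∫ x in (0:ℝ)..(2*Real.pi), g (circleMap 0 r x)) = 2 * (Real.pi:ℂ) :=
    mul_left_cancel₀ Complex.I_ne_zero (by rw [hC]; ring)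
  have heq : ∀ θ : ℝ, g (circleMap 0 r θ) = (w + (r:ℂ) * circlePt θ) / (w - (r:ℂ) * circlePt θ) := by
    intro θ; simp [hg, circleMap_zero, circlePt]
  rw [intervalIntegral.integral_congr (fun θ _ => heq θ)] at hX
  rw [hX]

lemma integral_poisson (w : ℂ) (hw : ‖w‖ = 1) (r : ℝ) (hr0 : 0 ≤ r) (hr1 : r < 1) :
    ∫ θ in (0:ℝ)..(2*Real.pi),
      (1 - ‖(r:ℂ) * circlePt θ‖ ^ 2) / ‖w - (r:ℂ) * circlePt θ‖ ^ 2
      = 2 * Real.pi := by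
  have habs : ∀ θ : ℝ, ‖(r:ℂ) * circlePt θ‖ = r := by
    intro θ; rw [norm_mul, abs_circlePt, mul_one, Complex.norm_real, Real.norm_eq_abs, _root_.abs_of_nonneg hr0]
  rcases eq_or_lt_of_le hr0 with h0 | h0
  · have : ∀ θ ∈ Set.uIcc (0:ℝ) (2*Real.pi),
        (1 - ‖(r:ℂ) * circlePt θ‖ ^ 2) / ‖w - (r:ℂ) * circlePt θ‖ ^ 2
        = 1 := by
      intro θ _
      rw [habs, ← h0]
      simp [hw]
    rw [intervalIntegral.integral_congr this]
    simp
  · have hne : ∀ θ : ℝ, w - (r:ℂ) * circlePt θ ≠ 0 := by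
      intro θ h
      rw [sub_eq_zero] at h
      have h2 := habs θ
      rw [← h, hw] at h2
      rw [← h2] at hr1
      exact lt_irrefl 1 hr1
    have hcont : Continuous fun θ : ℝ =>
        (w + (r:ℂ) * circlePt θ) / (w - (r:ℂ) * circlePt θ) := by
      apply Continuous.div (by unfold circlePt; fun_prop) (by unfold circlePt; fun_prop) hne
    have hint : IntervalIntegrable
        (fun θ : ℝ => (w + (r:ℂ) * circlePt θ) / (w - (r:ℂ) * circlePt θ))
        volume 0 (2*Real.pi) := hcont.intervalIntegrable _ _
    have hre := Complex.reCLM.intervalIntegral_comp_comm hint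
    rw [integral_herglotz w hw r h0 hr1] at hre
    have : ∀ θ ∈ Set.uIcc (0:ℝ) (2*Real.pi),
        (1 - ‖(r:ℂ) * circlePt θ‖ ^ 2) / ‖w - (r:ℂ) * circlePt θ‖ ^ 2
        = Complex.reCLM ((w + (r:ℂ) * circlePt θ) / (w - (r:ℂ) * circlePt θ)) := by
      intro θ _
      rw [show (Complex.reCLM ((w + (r:ℂ) * circlePt θ) / (w - (r:ℂ) * circlePt θ)) : ℝ)
        = ((w + (r:ℂ) * circlePt θ) / (w - (r:ℂ) * circlePt θ)).re from rfl]
      rw [re_herglotz w _ hw (by rw [habs]; exact hr1)]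
    rw [intervalIntegral.integral_congr this, hre]
    simp

lemma intervalIntegrable_inner (ρ : Measure UnitCircle) [IsFiniteMeasure ρ]
    (r : ℝ) (hr0 : 0 ≤ r) (hr1 : r < 1) :
    IntervalIntegrable (fun θ => ∫ ζ, poissonKer ((r:ℂ) * circlePt θ) ζ ∂ρ)
      volume 0 (2*Real.pi) := by
  rw [intervalIntegrable_iff_integrableOn_Ioc_of_le (by positivity)]
  exact (integrable_poisson_prod ρ r hr0 hr1).integral_prod_left

lemma fubini_poisson (ρ : Measure UnitCircle) [IsFiniteMeasure ρ]
    (r : ℝ) (hr0 : 0 ≤ r) (hr1 : r < 1) :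
    (∫ θ in (0:ℝ)..(2*Real.pi), ∫ ζ, poissonKer ((r:ℂ) * circlePt θ) ζ ∂ρ)
      = 2 * Real.pi * (ρ Set.univ).toReal := by
  rw [intervalIntegral.integral_of_le (by positivity)]
  have hswap := MeasureTheory.integral_integral_swap
    (f := fun θ ζ => poissonKer ((r:ℂ) * circlePt θ) ζ)
    (μ := volume.restrict (Set.Ioc (0:ℝ) (2*Real.pi))) (ν := ρ)
    (integrable_poisson_prod ρ r hr0 hr1)
  rw [hswap]
  have hinner : ∀ ζ : UnitCircle,
      (∫ θ in Set.Ioc (0:ℝ) (2*Real.pi), poissonKer ((r:ℂ) * circlePt θ) ζ)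
        = 2 * Real.pi := by
    intro ζ
    rw [← intervalIntegral.integral_of_le (by positivity : (0:ℝ) ≤ 2*Real.pi)]
    exact integral_poisson (ePt ζ) (abs_ePt ζ) r hr0 hr1
  rw [integral_congr_ae (Filter.Eventually.of_forall hinner)]
  rw [integral_const, smul_eq_mul, measureReal_def]
  ring
-- determinant nonzero from linear independence
lemma det_ne_zero (a b : ℂ) (hab : LinearIndependent ℝ ![a, b]) :
    a.re * b.im - a.im * b.re ≠ 0 := by
  rw [LinearIndependent.pair_iff] at hab
  intro hD
  have key : ∀ s t : ℝ, s * a.re + t * b.re = 0 → s * a.im + t * b.im = 0 →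
      s = 0 ∧ t = 0 := by
    intro s t h1 h2
    apply hab s t
    apply Complex.ext
    · simpa [Complex.real_smul] using h1
    · simpa [Complex.real_smul] using h2
  have h1 := key b.im (-a.im) (by nlinarith) (by ring)
  have him : a.im = 0 ∧ b.im = 0 := ⟨by linarith [h1.2], by linarith [h1.1]⟩
  have h2 := key b.re (-a.re) (by nlinarith) (by nlinarith [him.1, him.2])
  have hre : a.re = 0 ∧ b.re = 0 := ⟨by linarith [h2.2], by linarith [h2.1]⟩
  have ha : a = 0 := Complex.ext (by simp [hre.1]) (by simp [him.1])
  have := (hab 1 0 (by simp [ha])).1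
  norm_num at this

lemma exists_coeffs (a b : ℂ) (hab : LinearIndependent ℝ ![a, b]) :
    ∃ α β γ δ : ℝ, (α:ℂ) * a + (β:ℂ) * b = 1 ∧ (γ:ℂ) * a + (δ:ℂ) * b = Complex.I := by
  have hD := det_ne_zero a b hab
  set D := a.re * b.im - a.im * b.re with hDdef
  refine ⟨b.im/D, -a.im/D, -b.re/D, a.re/D, ?_, ?_⟩ <;>
  · apply Complex.ext <;>
    · simp only [Complex.add_re, Complex.add_im, Complex.mul_re, Complex.mul_im,
        Complex.ofReal_re, Complex.ofReal_im, Complex.one_re, Complex.one_im,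
        Complex.I_re, Complex.I_im]
      field_simp
      ring

/-- If `a, b ∈ ℂ` are linearly independent over `ℝ`, `f` is holomorphic on
the unit disc, and both `af` and `bf` admit boundary measures, then `f ∈ H¹(𝔻, ℂ)`. -/
theorem H1_of_two_boundary_measures (a b : ℂ)
    (hab : LinearIndependent ℝ ![a, b])
    (f : ℂ → ℂ) (hf : DifferentiableOn ℂ f (ball (0 : ℂ) 1))
    (μ ν : SignedMeasure UnitCircle)
    (hμ : HasBoundaryMeasure (fun l => a * f l) μ)
    (hν : HasBoundaryMeasure (fun l => b * f l) ν) :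
    HardyH1Bound f := by
  obtain ⟨α, β, γ, δ, h1, hI⟩ := exists_coeffs a b hab
  set Pμ := μ.toJordanDecomposition.posPart with hPμ
  set Nμ := μ.toJordanDecomposition.negPart with hNμ
  set Pν := ν.toJordanDecomposition.posPart with hPν
  set Nν := ν.toJordanDecomposition.negPart with hNν
  set K := |α| + |β| + |γ| + |δ| with hK
  have hKnn : 0 ≤ K := by positivity
  set M := (Pμ Set.univ).toReal + (Nμ Set.univ).toReal
    + (Pν Set.univ).toReal + (Nν Set.univ).toReal with hM
  have hπ : (0:ℝ) < 2 * Real.pi := by positivity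
  refine ⟨K * M, ?_⟩
  intro r hr
  obtain ⟨hr0, hr1⟩ := hr
  have hmem : ∀ θ : ℝ, (r:ℂ) * circlePt θ ∈ ball (0:ℂ) 1 := by
    intro θ
    rw [mem_ball_zero_iff, abs_r_circlePt r θ hr0]
    exact hr1
  set g : ℝ → ℝ := fun θ =>
    (K / (2*Real.pi)) * ((((∫ ζ, poissonKer ((r:ℂ) * circlePt θ) ζ ∂Pμ)
      + ∫ ζ, poissonKer ((r:ℂ) * circlePt θ) ζ ∂Nμ)
      + ∫ ζ, poissonKer ((r:ℂ) * circlePt θ) ζ ∂Pν)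
      + ∫ ζ, poissonKer ((r:ℂ) * circlePt θ) ζ ∂Nν) with hg
  have hbound : ∀ θ : ℝ, ‖f ((r:ℂ) * circlePt θ)‖ ≤ g θ := by
    intro θ
    set l := (r:ℂ) * circlePt θ with hl
    have hlab : ‖l‖ ≤ 1 := by
      rw [hl, abs_r_circlePt r θ hr0]; exact le_of_lt hr1
    have hknn : ∀ ζ, 0 ≤ poissonKer l ζ := fun ζ => poissonKer_nonneg l hlab ζ
    set A := (∫ ζ, poissonKer l ζ ∂Pμ) + ∫ ζ, poissonKer l ζ ∂Nμ with hA
    set B := (∫ ζ, poissonKer l ζ ∂Pν) + ∫ ζ, poissonKer l ζ ∂Nν with hB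
    have hAnn : 0 ≤ A := add_nonneg (integral_nonneg hknn) (integral_nonneg hknn)
    have hBnn : 0 ≤ B := add_nonneg (integral_nonneg hknn) (integral_nonneg hknn)
    have hsμ : |sInt μ (poissonKer l)| ≤ A := by
      have h := abs_sub (∫ x, poissonKer l x ∂Pμ) (∫ x, poissonKer l x ∂Nμ)
      rw [_root_.abs_of_nonneg (integral_nonneg hknn),
        _root_.abs_of_nonneg (integral_nonneg hknn)] at h
      exact h
    have hsν : |sInt ν (poissonKer l)| ≤ B := by
      have h := abs_sub (∫ x, poissonKer l x ∂Pν) (∫ x, poissonKer l x ∂Nν)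
      rw [_root_.abs_of_nonneg (integral_nonneg hknn),
        _root_.abs_of_nonneg (integral_nonneg hknn)] at h
      exact h
    have hμl := hμ l (hmem θ)
    have hνl := hν l (hmem θ)
    simp only at hμl hνl
    have hre : (f l).re = α * (a * f l).re + β * (b * f l).re := by
      have : f l = (α:ℂ) * (a * f l) + (β:ℂ) * (b * f l) := by
        rw [show (α:ℂ) * (a * f l) + (β:ℂ) * (b * f l) = ((α:ℂ)*a + (β:ℂ)*b) * f l by ring,
          h1, one_mul]
      conv_lhs => rw [this]
      simp [Complex.add_re, Complex.mul_re]
    have him : (f l).im = -(γ * (a * f l).re + δ * (b * f l).re) := by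
      have : Complex.I * f l = (γ:ℂ) * (a * f l) + (δ:ℂ) * (b * f l) := by
        rw [show (γ:ℂ) * (a * f l) + (δ:ℂ) * (b * f l) = ((γ:ℂ)*a + (δ:ℂ)*b) * f l by ring,
          hI]
      have h2 : (Complex.I * f l).re = γ * (a * f l).re + δ * (b * f l).re := by
        conv_lhs => rw [this]
        simp [Complex.add_re, Complex.mul_re]
      rw [← h2]
      simp [Complex.mul_re]
    have hre' : |(f l).re| ≤ (|α| * A + |β| * B) / (2*Real.pi) := by
      rw [hre, hμl, hνl]
      have e1 : |α * (1 / (2*Real.pi) * sInt μ (poissonKer l))| ≤ |α| * (1/(2*Real.pi) * A) := by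
        rw [abs_mul, abs_mul, _root_.abs_of_nonneg (by positivity : (0:ℝ) ≤ 1/(2*Real.pi))]
        gcongr
      have e2 : |β * (1 / (2*Real.pi) * sInt ν (poissonKer l))| ≤ |β| * (1/(2*Real.pi) * B) := by
        rw [abs_mul, abs_mul, _root_.abs_of_nonneg (by positivity : (0:ℝ) ≤ 1/(2*Real.pi))]
        gcongr
      refine (abs_add_le _ _).trans ((add_le_add e1 e2).trans (le_of_eq (by ring)))
    have him' : |(f l).im| ≤ (|γ| * A + |δ| * B) / (2*Real.pi) := by
      rw [him, abs_neg, hμl, hνl]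
      have e1 : |γ * (1 / (2*Real.pi) * sInt μ (poissonKer l))| ≤ |γ| * (1/(2*Real.pi) * A) := by
        rw [abs_mul, abs_mul, _root_.abs_of_nonneg (by positivity : (0:ℝ) ≤ 1/(2*Real.pi))]
        gcongr
      have e2 : |δ * (1 / (2*Real.pi) * sInt ν (poissonKer l))| ≤ |δ| * (1/(2*Real.pi) * B) := by
        rw [abs_mul, abs_mul, _root_.abs_of_nonneg (by positivity : (0:ℝ) ≤ 1/(2*Real.pi))]
        gcongr
      refine (abs_add_le _ _).trans ((add_le_add e1 e2).trans (le_of_eq (by ring)))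
    calc ‖f l‖ ≤ |(f l).re| + |(f l).im| := Complex.norm_le_abs_re_add_abs_im _
      _ ≤ (|α| * A + |β| * B) / (2*Real.pi) + (|γ| * A + |δ| * B) / (2*Real.pi) :=
          add_le_add hre' him'
      _ ≤ g θ := by
          rw [hg]
          simp only
          rw [show ((((∫ ζ, poissonKer l ζ ∂Pμ) + ∫ ζ, poissonKer l ζ ∂Nμ)
            + ∫ ζ, poissonKer l ζ ∂Pν) + ∫ ζ, poissonKer l ζ ∂Nν) = A + B by rw [hA, hB]; ring]
          have hnum : |α| * A + |β| * B + (|γ| * A + |δ| * B) ≤ K * (A + B) := by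
            rw [hK]
            nlinarith [abs_nonneg α, abs_nonneg β, abs_nonneg γ, abs_nonneg δ, hAnn, hBnn]
          calc (|α| * A + |β| * B) / (2*Real.pi) + (|γ| * A + |δ| * B) / (2*Real.pi)
              = (|α| * A + |β| * B + (|γ| * A + |δ| * B)) / (2*Real.pi) := by ring
            _ ≤ K * (A + B) / (2*Real.pi) := by gcongr
            _ = K / (2*Real.pi) * (A + B) := by ring
  -- integrability
  have hcf : Continuous fun θ : ℝ => ‖f ((r:ℂ) * circlePt θ)‖ := by
    apply continuous_norm.comp
    apply ContinuousOn.comp_continuous hf.continuousOn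
      (by exact continuous_const.mul continuous_circlePt) hmem
  have hIμp := intervalIntegrable_inner Pμ r hr0 hr1
  have hIμn := intervalIntegrable_inner Nμ r hr0 hr1
  have hIνp := intervalIntegrable_inner Pν r hr0 hr1
  have hIνn := intervalIntegrable_inner Nν r hr0 hr1
  have hIg : IntervalIntegrable g volume 0 (2*Real.pi) := by
    apply IntervalIntegrable.const_mul
    exact ((hIμp.add hIμn).add hIνp).add hIνn
  calc (∫ θ in (0:ℝ)..(2*Real.pi), ‖f ((r:ℂ) * circlePt θ)‖)
      ≤ ∫ θ in (0:ℝ)..(2*Real.pi), g θ := by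
        apply intervalIntegral.integral_mono_on (le_of_lt hπ)
          (hcf.intervalIntegrable _ _) hIg (fun θ _ => hbound θ)
    _ = K * M := by
        rw [hg]
        simp only
        rw [intervalIntegral.integral_const_mul]
        rw [intervalIntegral.integral_add ((hIμp.add hIμn).add hIνp) hIνn,
          intervalIntegral.integral_add (hIμp.add hIμn) hIνp,
          intervalIntegral.integral_add hIμp hIμn]
        rw [fubini_poisson Pμ r hr0 hr1, fubini_poisson Nμ r hr0 hr1,
          fubini_poisson Pν r hr0 hr1, fubini_poisson Nν r hr0 hr1]
        rw [hM]
        field_simp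
end
end

section
/- Let D ⊂ C^n be a convex domain and let φ be a complex geodesic for D with left inverse f. Define h(λ) := (∂f/∂z_1(φ(λ)), …, ∂f/∂z_n(φ(λ))). Then, with ψ_z defined as ψ_z(λ) := (h(λ)•(z−φ(λ)) − h(0)•(z−φ(0)))/λ + λ·conj(h(0)•(z−φ(0))), one has Re ψ_{φ(0)}(0) ≠ 0 and Re ψ_z(λ) ≤ 0 for all λ in the unit disc and all z ∈ D. -/
open Complex Metric

noncomputable section

/-- The bilinear dot product on `ℂⁿ`. -/
def dotn {n : ℕ} (z w : Fin n → ℂ) : ℂ := ∑ j, z j * w j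

/-- The function `ψ_z(λ) = (h(λ)•(z-φ(λ)) - h(0)•(z-φ(0)))/λ + λ conj(h(0)•(z-φ(0)))`,
with the removable singularity at `λ = 0` handled by `dslope`. -/
def psi {n : ℕ} (φ h : ℂ → Fin n → ℂ) (z : Fin n → ℂ) (l : ℂ) : ℂ :=
  dslope (fun w => dotn (h w) (z - φ w)) 0 l
    + l * (starRingEnd ℂ) (dotn (h 0) (z - φ 0))

-- helper: derivative of re ∘ w
theorem hasDerivAt_re_comp {w : ℝ → ℂ} {w' : ℂ} {t : ℝ} (hw : HasDerivAt w w' t) :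
    HasDerivAt (fun s => (w s).re) w'.re t := by
  have := (Complex.reCLM.hasFDerivAt (x := w t)).comp_hasDerivAt t hw
  exact this

theorem hasDerivAt_normSq_comp {w : ℝ → ℂ} {w' : ℂ} {t : ℝ} (hw : HasDerivAt w w' t) :
    HasDerivAt (fun s => Complex.normSq (w s)) (2 * ((starRingEnd ℂ) (w t) * w').re) t := by
  have hc : HasDerivAt (fun s => (starRingEnd ℂ) (w s)) ((starRingEnd ℂ) w') t := by
    simpa using hw.star
  have hm := hc.mul hw
  have := hasDerivAt_re_comp hm
  convert this using 1
  · ext s; simp [Complex.normSq_apply, Complex.mul_re]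
  · simp [Complex.add_re, Complex.mul_re, Complex.conj_re, Complex.conj_im]; ring

theorem mobius_identity (a w : ℂ) :
    normSq (1 - (starRingEnd ℂ) a * w) - normSq (w - a) = (1 - normSq a) * (1 - normSq w) := by
  simp [Complex.normSq_apply, Complex.sub_re, Complex.sub_im, Complex.mul_re, Complex.mul_im]
  ring

theorem mobius_denom_ne {a w : ℂ} (ha : normSq a < 1) (hw : normSq w < 1) :
    1 - (starRingEnd ℂ) a * w ≠ 0 := by
  intro hzero
  have h1 : (starRingEnd ℂ) a * w = 1 := by linear_combination -hzero
  have := congrArg normSq h1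
  rw [map_mul, Complex.normSq_conj, map_one] at this
  nlinarith [Complex.normSq_nonneg a, Complex.normSq_nonneg w]

theorem mobius_lt_one {a w : ℂ} (ha : normSq a < 1) (hw : normSq w < 1) :
    ‖(w - a) / (1 - (starRingEnd ℂ) a * w)‖ < 1 := by
  have hd := mobius_denom_ne ha hw
  have hkey : normSq (w - a) < normSq (1 - (starRingEnd ℂ) a * w) := by
    have := mobius_identity a w
    nlinarith [Complex.normSq_nonneg a, Complex.normSq_nonneg w]
  have h2 : ‖w - a‖ < ‖1 - (starRingEnd ℂ) a * w‖ := by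
    have := Complex.normSq_eq_norm_sq (w - a)
    have := Complex.normSq_eq_norm_sq (1 - (starRingEnd ℂ) a * w)
    nlinarith [norm_nonneg (w - a), norm_nonneg (1 - (starRingEnd ℂ) a * w)]
  rw [norm_div, div_lt_one (lt_of_le_of_lt (norm_nonneg _) h2)]
  exact h2

theorem quotient_bound {F : ℂ → ℂ} {r : ℝ} (hr : 0 < r) (hd : DifferentiableOn ℂ F (ball 0 r))
    (hm : Set.MapsTo F (ball 0 r) (ball 0 1)) {s : ℂ} (hs : s ∈ ball (0 : ℂ) r) :
    ‖dslope F 0 s - deriv F 0‖ ≤ (4 / r + 1) / r * ‖s‖ := by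
  set G := dslope F 0 with hG
  have hGd : DifferentiableOn ℂ G (ball 0 r) :=
    (differentiableOn_dslope (ball_mem_nhds 0 hr)).mpr hd
  have hFm2 : Set.MapsTo F (ball 0 r) (ball (F 0) 2) := by
    intro x hx
    have h1 : ‖F x‖ < 1 := by simpa [mem_ball, dist_zero_right] using hm hx
    have h2 : ‖F 0‖ < 1 := by
      simpa [mem_ball, dist_zero_right] using hm (mem_ball_self hr)
    rw [mem_ball, dist_eq_norm]
    calc ‖F x - F 0‖ ≤ ‖F x‖ + ‖F 0‖ := norm_sub_le _ _
      _ < 2 := by linarith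
  have hGb : ∀ x ∈ ball (0 : ℂ) r, ‖G x‖ ≤ 2 / r := fun x hx =>
    norm_dslope_le_div_of_mapsTo_ball hd (fun y hy => ball_subset_closedBall (hFm2 hy)) hx
  have hGm : Set.MapsTo G (ball 0 r) (ball (G 0) (4 / r + 1)) := by
    intro x hx
    rw [mem_ball, dist_eq_norm]
    have h1 := hGb x hx
    have h2 := hGb 0 (mem_ball_self hr)
    calc ‖G x - G 0‖ ≤ ‖G x‖ + ‖G 0‖ := norm_sub_le _ _
      _ ≤ 2 / r + 2 / r := by linarith
      _ < 4 / r + 1 := by rw [← add_div]; linarith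
  have := dist_le_div_mul_dist_of_mapsTo_ball hGd (fun y hy => ball_subset_closedBall (hGm hy)) hs
  rw [dist_eq_norm, dist_eq_norm, sub_zero] at this
  rwa [hG, dslope_same] at this

theorem fderiv_comp_differentiable {n : ℕ} {D : Set (Fin n → ℂ)} (hDopen : IsOpen D)
    {φ : ℂ → Fin n → ℂ} (hφ : DifferentiableOn ℂ φ (ball (0 : ℂ) 1))
    (hφD : Set.MapsTo φ (ball (0 : ℂ) 1) D)
    {f : (Fin n → ℂ) → ℂ} (hf : DifferentiableOn ℂ f D)
    (hfD : Set.MapsTo f D (ball (0 : ℂ) 1))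
    {w₀ : ℂ} (hw₀ : w₀ ∈ ball (0 : ℂ) 1) :
    ∃ δ > 0, ball w₀ δ ⊆ ball (0 : ℂ) 1 ∧
      ∀ y : Fin n → ℂ, DifferentiableOn ℂ (fun w => fderiv ℂ f (φ w) y) (ball w₀ δ) := by
  obtain ⟨ε, hε, hεD⟩ := Metric.isOpen_iff.mp hDopen _ (hφD hw₀)
  have hφc : ContinuousAt φ w₀ :=
    (hφ.differentiableAt (isOpen_ball.mem_nhds hw₀)).continuousAt
  obtain ⟨δ₁, hδ₁, hδ₁'⟩ := Metric.continuousAt_iff.mp hφc (ε / 2) (by positivity)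
  have hw₀1 : ‖w₀‖ < 1 := by simpa [mem_ball, dist_zero_right] using hw₀
  set δ : ℝ := min δ₁ (1 - ‖w₀‖) with hδdef
  have hδ : 0 < δ := lt_min hδ₁ (by linarith)
  have hsub : ball w₀ δ ⊆ ball (0 : ℂ) 1 := by
    intro x hx
    rw [mem_ball] at hx ⊢
    have h1 : dist x 0 ≤ dist x w₀ + dist w₀ 0 := dist_triangle _ _ _
    have h2 : dist w₀ 0 = ‖w₀‖ := by rw [dist_zero_right]
    have h3 : δ ≤ 1 - ‖w₀‖ := min_le_right _ _
    linarith
  refine ⟨δ, hδ, hsub, fun y => ?_⟩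
  set r : ℝ := ε / (2 * (‖y‖ + 1)) with hrdef
  have hy1 : (0:ℝ) < ‖y‖ + 1 := by positivity
  have hr : 0 < r := by positivity
  -- membership of the perturbed points in D
  have hmem : ∀ w ∈ ball w₀ δ, ∀ s ∈ ball (0 : ℂ) r, φ w + s • y ∈ D := by
    intro w hw s hs
    apply hεD
    rw [mem_ball] at hw hs ⊢
    have h1 : dist (φ w) (φ w₀) < ε / 2 := hδ₁' (lt_of_lt_of_le hw (min_le_left _ _))
    have h2 : ‖s‖ < r := by rwa [dist_zero_right] at hs
    have h3 : ‖s • y‖ ≤ r * ‖y‖ := by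
      rw [norm_smul]
      exact mul_le_mul_of_nonneg_right h2.le (norm_nonneg _)
    have h4 : r * ‖y‖ < ε / 2 := by
      rw [hrdef]
      rw [div_mul_eq_mul_div, div_lt_iff₀ (by positivity), div_mul_eq_mul_div,
        lt_div_iff₀ (by norm_num : (0:ℝ) < 2)]
      nlinarith [norm_nonneg y, hε]
    calc dist (φ w + s • y) (φ w₀) ≤ dist (φ w + s • y) (φ w) + dist (φ w) (φ w₀) :=
          dist_triangle _ _ _
      _ < ε / 2 + ε / 2 := by
          apply add_lt_add_of_le_of_lt _ h1
          · rw [dist_eq_norm, add_sub_cancel_left]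
            exact le_of_lt (h3.trans_lt h4)
      _ = ε := by ring
  -- the one-variable slices
  have hFd : ∀ w ∈ ball w₀ δ, DifferentiableOn ℂ (fun s : ℂ => f (φ w + s • y)) (ball (0:ℂ) r) := by
    intro w hw s hs
    have hin : φ w + s • y ∈ D := hmem w hw s hs
    have hfd : DifferentiableAt ℂ f (φ w + s • y) := hf.differentiableAt (hDopen.mem_nhds hin)
    exact (hfd.comp s ((differentiableAt_const _).add
      ((differentiableAt_id).smul_const y))).differentiableWithinAt
  have hFm : ∀ w ∈ ball w₀ δ, Set.MapsTo (fun s : ℂ => f (φ w + s • y)) (ball (0:ℂ) r) (ball (0:ℂ) 1) :=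
    fun w hw s hs => hfD (hmem w hw s hs)
  have hF0 : ∀ w : ℂ, f (φ w + (0:ℂ) • y) = f (φ w) := by intro w; simp
  have hFderiv : ∀ w ∈ ball w₀ δ, HasDerivAt (fun s : ℂ => f (φ w + s • y))
      (fderiv ℂ f (φ w) y) 0 := by
    intro w hw
    have hin : φ w ∈ D := by
      have := hmem w hw 0 (mem_ball_self hr)
      simpa using this
    have hfd : HasFDerivAt f (fderiv ℂ f (φ w)) (φ w) :=
      (hf.differentiableAt (hDopen.mem_nhds hin)).hasFDerivAt
    have hpath : HasDerivAt (fun s : ℂ => φ w + s • y) y 0 := by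
      have h1 : HasDerivAt (fun s : ℂ => s • y) ((1:ℂ) • y) 0 :=
        (hasDerivAt_id (0:ℂ)).smul_const y
      rw [one_smul] at h1
      exact h1.const_add (φ w)
    have hfd' : HasFDerivAt f (fderiv ℂ f (φ w)) (φ w + (0:ℂ) • y) := by
      simpa using hfd
    exact hfd'.comp_hasDerivAt 0 hpath
  -- difference quotients
  set Q : ℂ → ℂ → ℂ := fun s w => (f (φ w + s • y) - f (φ w)) * s⁻¹ with hQdef
  set C : ℝ := (4 / r + 1) / r with hCdef
  have hC : 0 ≤ C := by positivity
  have hest : ∀ w ∈ ball w₀ δ, ∀ s ∈ ball (0 : ℂ) r, s ≠ 0 →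
      ‖fderiv ℂ f (φ w) y - Q s w‖ ≤ C * ‖s‖ := by
    intro w hw s hs hs0
    have hq := quotient_bound hr (hFd w hw) (hFm w hw) hs
    have h1 : dslope (fun s : ℂ => f (φ w + s • y)) 0 s = Q s w := by
      rw [dslope_of_ne _ hs0, slope_def_field]
      simp only [hQdef, hF0]
      rw [sub_zero]
      field_simp
    have h2 : deriv (fun s : ℂ => f (φ w + s • y)) 0 = fderiv ℂ f (φ w) y :=
      (hFderiv w hw).deriv
    rw [h1, h2] at hq
    rwa [norm_sub_rev]
  have htend : TendstoUniformlyOn Q (fun w => fderiv ℂ f (φ w) y)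
      (nhdsWithin (0 : ℂ) {(0 : ℂ)}ᶜ) (ball w₀ δ) := by
    rw [Metric.tendstoUniformlyOn_iff]
    intro ε' hε'
    have hρ : 0 < min r (ε' / (C + 1)) := lt_min hr (by positivity)
    filter_upwards [mem_nhdsWithin_of_mem_nhds (ball_mem_nhds (0 : ℂ) hρ),
      self_mem_nhdsWithin] with s hs hs0
    intro w hw
    have hs0' : s ≠ 0 := hs0
    have hsr : s ∈ ball (0 : ℂ) r := by
      rw [mem_ball] at hs ⊢
      exact lt_of_lt_of_le hs (min_le_left _ _)
    have hsε : ‖s‖ < ε' / (C + 1) := by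
      rw [mem_ball, dist_zero_right] at hs
      exact lt_of_lt_of_le hs (min_le_right _ _)
    have h1 := hest w hw s hsr hs0'
    rw [dist_eq_norm]
    have h2 : C * ‖s‖ < ε' := by
      have h3 : ε' / (C + 1) * (C + 1) = ε' := by field_simp
      nlinarith [norm_nonneg s]
    exact lt_of_le_of_lt h1 h2
  have hev : ∀ᶠ s in nhdsWithin (0 : ℂ) {(0 : ℂ)}ᶜ, DifferentiableOn ℂ (Q s) (ball w₀ δ) := by
    filter_upwards [mem_nhdsWithin_of_mem_nhds (ball_mem_nhds (0 : ℂ) hr)] with s hs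
    intro w hw
    have hd1 : DifferentiableAt ℂ (fun w => f (φ w + s • y)) w := by
      have hin : φ w + s • y ∈ D := hmem w hw s hs
      have hφd : DifferentiableAt ℂ φ w := hφ.differentiableAt (isOpen_ball.mem_nhds (hsub hw))
      exact (hf.differentiableAt (hDopen.mem_nhds hin)).comp w
        (hφd.add_const (s • y))
    have hd2 : DifferentiableAt ℂ (fun w => f (φ w)) w := by
      have hin : φ w ∈ D := by simpa using hmem w hw 0 (mem_ball_self hr)
      have hφd : DifferentiableAt ℂ φ w := hφ.differentiableAt (isOpen_ball.mem_nhds (hsub hw))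
      exact (hf.differentiableAt (hDopen.mem_nhds hin)).comp w hφd
    exact ((hd1.sub hd2).mul_const _).differentiableWithinAt
  exact htend.tendstoLocallyUniformlyOn.differentiableOn hev isOpen_ball


/-- Necessary condition: if `φ` is a complex geodesic for a convex domain `D`
with left inverse `f`, and `h(λ)` is the gradient `(∂f/∂z_j(φ(λ)))_j`, then
`Re ψ_{φ(0)}(0) ≠ 0` and `Re ψ_z(λ) ≤ 0` for all `λ ∈ 𝔻`, `z ∈ D`. -/
theorem complex_geodesic_necessary {n : ℕ} (D : Set (Fin n → ℂ))
    (hDopen : IsOpen D) (hDne : D.Nonempty) (hDconv : Convex ℝ D)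
    (φ : ℂ → Fin n → ℂ) (hφ : DifferentiableOn ℂ φ (ball (0 : ℂ) 1))
    (hφD : Set.MapsTo φ (ball (0 : ℂ) 1) D)
    (f : (Fin n → ℂ) → ℂ) (hf : DifferentiableOn ℂ f D)
    (hfD : Set.MapsTo f D (ball (0 : ℂ) 1))
    (hleft : ∀ l ∈ ball (0 : ℂ) 1, f (φ l) = l)
    (h : ℂ → Fin n → ℂ)
    (hdef : ∀ l ∈ ball (0 : ℂ) 1, ∀ j, h l j = fderiv ℂ f (φ l) (Pi.single j 1)) :
    (psi φ h (φ 0) 0).re ≠ 0 ∧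
      ∀ l ∈ ball (0 : ℂ) 1, ∀ z ∈ D, (psi φ h z l).re ≤ 0 := by
  have h0mem : (0 : ℂ) ∈ ball (0 : ℂ) 1 := mem_ball_self one_pos
  -- the derivative of f applied to a vector is the dot product with h
  have hfapp : ∀ l ∈ ball (0 : ℂ) 1, ∀ v : Fin n → ℂ,
      fderiv ℂ f (φ l) v = dotn (h l) v := by
    intro l hl v
    have hv : v = ∑ j, v j • (Pi.single j 1 : Fin n → ℂ) := by
      ext i
      rw [Finset.sum_apply]
      simp [Pi.single_apply]
    calc fderiv ℂ f (φ l) v = fderiv ℂ f (φ l) (∑ j, v j • (Pi.single j 1 : Fin n → ℂ)) := by rw [← hv]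
      _ = ∑ j, v j • fderiv ℂ f (φ l) ((Pi.single j 1 : Fin n → ℂ)) := by
          rw [map_sum]
          congr 1
          ext j
          rw [ContinuousLinearMap.map_smul]
      _ = ∑ j, h l j * v j := by
          congr 1; ext j; rw [hdef l hl j, smul_eq_mul, mul_comm]
      _ = dotn (h l) v := by rw [dotn]
  -- chain rule : dotn (h l) (deriv φ l) = 1
  have hchain : ∀ l ∈ ball (0 : ℂ) 1, dotn (h l) (deriv φ l) = 1 := by
    intro l hl
    have hφd : DifferentiableAt ℂ φ l := hφ.differentiableAt (isOpen_ball.mem_nhds hl)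
    have hφ' : HasDerivAt φ (deriv φ l) l := hφd.hasDerivAt
    have hfd : HasFDerivAt f (fderiv ℂ f (φ l)) (φ l) :=
      (hf.differentiableAt (hDopen.mem_nhds (hφD hl))).hasFDerivAt
    have hcomp : HasDerivAt (fun x => f (φ x)) (fderiv ℂ f (φ l) (deriv φ l)) l :=
      hfd.comp_hasDerivAt l hφ'
    have hid : HasDerivAt (fun x : ℂ => f (φ x)) 1 l := by
      have : (fun x : ℂ => f (φ x)) =ᶠ[nhds l] (fun x : ℂ => x) := by
        filter_upwards [isOpen_ball.mem_nhds hl] with x hx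
        exact hleft x hx
      exact (hasDerivAt_id l).congr_of_eventuallyEq (by filter_upwards [isOpen_ball.mem_nhds hl] with x hx using (hleft x hx))
    have := hcomp.unique hid
    rw [← hfapp l hl]
    exact this
  -- differentiability of h near 0
  obtain ⟨δ0, hδ0, hsub0, hdiffy⟩ := fderiv_comp_differentiable hDopen hφ hφD hf hfD h0mem
  have h0δ : (0 : ℂ) ∈ ball (0 : ℂ) δ0 := mem_ball_self hδ0
  have hhOn : ∀ j, DifferentiableOn ℂ (fun w => h w j) (ball (0 : ℂ) δ0) := fun j =>
    (hdiffy (Pi.single j 1)).congr (fun w hw => hdef w (hsub0 hw) j)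
  have hφj : ∀ j, DifferentiableOn ℂ (fun w => φ w j) (ball (0 : ℂ) 1) := by
    intro j
    exact (ContinuousLinearMap.proj (R := ℂ) (φ := fun _ : Fin n => ℂ)
      j).differentiable.comp_differentiableOn hφ
  have hgzOn : ∀ z : Fin n → ℂ,
      DifferentiableOn ℂ (fun w => dotn (h w) (z - φ w)) (ball (0 : ℂ) δ0) := by
    intro z
    have : DifferentiableOn ℂ (fun w => ∑ j, h w j * (z j - φ w j)) (ball (0 : ℂ) δ0) := by
      apply DifferentiableOn.fun_sum
      intro j _
      exact (hhOn j).mul ((differentiableOn_const (z j)).sub ((hφj j).mono hsub0))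
    exact this.congr (fun w _ => by simp [dotn])
  have hφ0' : HasDerivAt φ (deriv φ 0) 0 :=
    (hφ.differentiableAt (isOpen_ball.mem_nhds h0mem)).hasDerivAt
  have hφcomp : ∀ j, HasDerivAt (fun w => φ w j) (deriv φ 0 j) 0 := by
    intro j
    exact (ContinuousLinearMap.proj (R := ℂ) (φ := fun _ : Fin n => ℂ)
      j).hasFDerivAt.comp_hasDerivAt 0 hφ0'
  -- Part 1
  have hgval : HasDerivAt (fun w => dotn (h w) (φ 0 - φ w)) (-1 : ℂ) 0 := by
    have hsum : HasDerivAt (fun w => ∑ j, h w j * (φ 0 j - φ w j))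
        (∑ j, (deriv (fun w => h w j) 0 * (φ 0 j - φ 0 j)
          + h 0 j * (0 - deriv φ 0 j))) 0 := by
      apply HasDerivAt.fun_sum
      intro j _
      exact ((hhOn j).differentiableAt (isOpen_ball.mem_nhds h0δ)).hasDerivAt.mul
        ((hasDerivAt_const (0 : ℂ) (φ 0 j)).sub (hφcomp j))
    have hval : (∑ j, (deriv (fun w => h w j) 0 * (φ 0 j - φ 0 j)
        + h 0 j * (0 - deriv φ 0 j))) = -1 := by
      have h1 : (∑ j, (deriv (fun w => h w j) 0 * (φ 0 j - φ 0 j)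
          + h 0 j * (0 - deriv φ 0 j))) = -∑ j, h 0 j * deriv φ 0 j := by
        rw [← Finset.sum_neg_distrib]
        congr 1; ext j; ring
      rw [h1]
      have h2 : (∑ j, h 0 j * deriv φ 0 j) = dotn (h 0) (deriv φ 0) := rfl
      rw [h2, hchain 0 h0mem]
    rw [hval] at hsum
    have hfe : (fun w => dotn (h w) (φ 0 - φ w)) = fun w => ∑ j, h w j * (φ 0 j - φ w j) := by
      funext w; simp [dotn]
    rw [hfe]
    exact hsum
  constructor
  · have : psi φ h (φ 0) 0 = -1 := by
      rw [psi, dslope_same, hgval.deriv]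
      simp
    rw [this]
    norm_num
  · -- Part 2
    have habs : ∀ x ∈ D, normSq (f x) < 1 := by
      intro x hx
      have h1 : ‖f x‖ < 1 := by
        have := hfD hx
        rwa [mem_ball, dist_zero_right] at this
      rw [Complex.normSq_eq_norm_sq]
      nlinarith [norm_nonneg (f x)]
    have main : ∀ l ∈ ball (0 : ℂ) 1, l ≠ 0 → ∀ z ∈ D, (psi φ h z l).re ≤ 0 := by
      intro l hl hl0 z hz
      set gl := dotn (h l) (z - φ l) with hgldef
      set g0 := dotn (h 0) (z - φ 0) with hg0def
      have hmemD : ∀ μ ∈ ball (0 : ℂ) 1, ∀ t : ℝ, t ∈ Set.Icc (0 : ℝ) 1 →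
          φ μ + (t : ℂ) • (z - φ μ) ∈ D := by
        intro μ hμ t ht
        have heq : φ μ + (t : ℂ) • (z - φ μ) = (1 - t) • φ μ + t • z := by
          funext j
          simp only [Pi.add_apply, Pi.smul_apply, Pi.sub_apply, Complex.real_smul,
            smul_eq_mul]
          push_cast
          ring
        rw [heq]
        exact hDconv (hφD hμ) hz (by linarith [ht.2]) ht.1 (by ring)
      set u : ℝ → ℂ := fun t => f (φ l + (t : ℂ) • (z - φ l)) with hudef
      set av : ℝ → ℂ := fun t => f (φ 0 + (t : ℂ) • (z - φ 0)) with havdef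
      have hu0 : u 0 = l := by
        have : φ l + ((0 : ℝ) : ℂ) • (z - φ l) = φ l := by simp
        rw [hudef]; simp only [this]; exact hleft l hl
      have hav0 : av 0 = 0 := by
        have : φ 0 + ((0 : ℝ) : ℂ) • (z - φ 0) = φ 0 := by simp
        rw [havdef]; simp only [this]; exact hleft 0 h0mem
      -- derivatives of the slices
      have hder : ∀ μ ∈ ball (0 : ℂ) 1,
          HasDerivAt (fun t : ℝ => f (φ μ + (t : ℂ) • (z - φ μ))) (dotn (h μ) (z - φ μ)) 0 := by
        intro μ hμ
        have hfd : HasFDerivAt f (fderiv ℂ f (φ μ)) (φ μ) :=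
          (hf.differentiableAt (hDopen.mem_nhds (hφD hμ))).hasFDerivAt
        have hpath : HasDerivAt (fun s : ℂ => φ μ + s • (z - φ μ)) (z - φ μ) 0 := by
          have h1 : HasDerivAt (fun s : ℂ => s • (z - φ μ)) ((1 : ℂ) • (z - φ μ)) 0 :=
            (hasDerivAt_id (0 : ℂ)).smul_const (z - φ μ)
          rw [one_smul] at h1
          exact h1.const_add (φ μ)
        have hfd' : HasFDerivAt f (fderiv ℂ f (φ μ)) (φ μ + (0 : ℂ) • (z - φ μ)) := by
          simpa using hfd
        have hC : HasDerivAt (fun s : ℂ => f (φ μ + s • (z - φ μ)))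
            (fderiv ℂ f (φ μ) (z - φ μ)) 0 := hfd'.comp_hasDerivAt 0 hpath
        have hR : HasDerivAt (fun t : ℝ => f (φ μ + (t : ℂ) • (z - φ μ)))
            (fderiv ℂ f (φ μ) (z - φ μ)) 0 := by
          have := hC.comp_ofReal (z := 0)
          simpa using this
        rwa [hfapp μ hμ] at hR
      set q : ℝ → ℝ := fun t =>
        normSq (u t - av t) - normSq l * normSq (1 - (starRingEnd ℂ) (av t) * u t) with hqdef
      have hq0 : q 0 = 0 := by
        rw [hqdef]; simp [hu0, hav0]
      have hqle : ∀ t ∈ Set.Ioc (0 : ℝ) 1, q t ≤ 0 := by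
        intro t ht
        have htIcc : t ∈ Set.Icc (0 : ℝ) 1 := ⟨ht.1.le, ht.2⟩
        set F : ℂ → ℂ := fun μ => (f (φ μ + (t : ℂ) • (z - φ μ)) - av t) /
          (1 - (starRingEnd ℂ) (av t) * f (φ μ + (t : ℂ) • (z - φ μ))) with hFdef
        have hanorm : normSq (av t) < 1 := habs _ (hmemD 0 h0mem t htIcc)
        have hFval : ∀ μ ∈ ball (0 : ℂ) 1, normSq (f (φ μ + (t : ℂ) • (z - φ μ))) < 1 :=
          fun μ hμ => habs _ (hmemD μ hμ t htIcc)
        have hfcD : ∀ μ ∈ ball (0 : ℂ) 1,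
            DifferentiableAt ℂ (fun ν => f (φ ν + (t : ℂ) • (z - φ ν))) μ := by
          intro μ hμ
          have hφd : DifferentiableAt ℂ φ μ := hφ.differentiableAt (isOpen_ball.mem_nhds hμ)
          exact (hf.differentiableAt (hDopen.mem_nhds (hmemD μ hμ t htIcc))).comp μ
            (hφd.add (((differentiableAt_const z).sub hφd).const_smul ((t : ℝ) : ℂ)))
        have hFd : DifferentiableOn ℂ F (ball (0 : ℂ) 1) := by
          intro μ hμ
          have hdenne : 1 - (starRingEnd ℂ) (av t) * f (φ μ + (t : ℂ) • (z - φ μ)) ≠ 0 :=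
            mobius_denom_ne hanorm (hFval μ hμ)
          exact (((hfcD μ hμ).sub_const (av t)).div
            ((differentiableAt_const (1 : ℂ)).sub
              ((differentiableAt_const ((starRingEnd ℂ) (av t))).mul (hfcD μ hμ)))
            hdenne).differentiableWithinAt
        have hFmaps : Set.MapsTo F (ball (0 : ℂ) 1) (ball (0 : ℂ) 1) := by
          intro μ hμ
          rw [mem_ball, dist_zero_right]
          exact mobius_lt_one hanorm (hFval μ hμ)
        have hF0 : F 0 = 0 := by
          rw [hFdef]
          simp only [havdef]
          rw [sub_self, zero_div]
        have hlabs : ‖l‖ < 1 := by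
          rwa [mem_ball, dist_zero_right] at hl
        have hS := norm_le_norm_of_mapsTo_ball hFd (fun y hy => ball_subset_closedBall (hFmaps hy)) hF0 hlabs
        have hFl : F l = (u t - av t) / (1 - (starRingEnd ℂ) (av t) * u t) := rfl
        rw [hFl] at hS
        have hdenne : 1 - (starRingEnd ℂ) (av t) * u t ≠ 0 :=
          mobius_denom_ne hanorm (hFval l hl)
        rw [norm_div, div_le_iff₀ (norm_pos_iff.mpr hdenne)] at hS
        simp only [hqdef]
        have e1 : normSq (u t - av t) = ‖u t - av t‖ ^ 2 := Complex.normSq_eq_norm_sq _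
        have e2 : normSq (1 - (starRingEnd ℂ) (av t) * u t)
            = ‖1 - (starRingEnd ℂ) (av t) * u t‖ ^ 2 := Complex.normSq_eq_norm_sq _
        have e3 : normSq l = ‖l‖ ^ 2 := Complex.normSq_eq_norm_sq _
        rw [e1, e2, e3]
        nlinarith [norm_nonneg (u t - av t), norm_nonneg l,
          norm_nonneg (1 - (starRingEnd ℂ) (av t) * u t)]
      -- derivative of q at 0
      have hud : HasDerivAt u gl 0 := hder l hl
      have havd : HasDerivAt av g0 0 := hder 0 h0mem
      have hw1 : HasDerivAt (fun t => u t - av t) (gl - g0) 0 := hud.sub havd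
      have hn1 := hasDerivAt_normSq_comp hw1
      have hconj : HasDerivAt (fun t => (starRingEnd ℂ) (av t)) ((starRingEnd ℂ) g0) 0 := by
        simpa using havd.star
      have hw2 : HasDerivAt (fun t => 1 - (starRingEnd ℂ) (av t) * u t)
          (0 - ((starRingEnd ℂ) g0 * u 0 + (starRingEnd ℂ) (av 0) * gl)) 0 :=
        (hasDerivAt_const (0 : ℝ) (1 : ℂ)).sub (hconj.mul hud)
      have hn2 := hasDerivAt_normSq_comp hw2
      have hqd := hn1.sub (hn2.const_mul (normSq l))
      rw [hu0, hav0] at hqd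
      set d : ℝ := 2 * ((starRingEnd ℂ) (l - 0) * (gl - g0)).re -
        normSq l * (2 * ((starRingEnd ℂ) (1 - (starRingEnd ℂ) 0 * l) *
          (0 - ((starRingEnd ℂ) g0 * l + (starRingEnd ℂ) 0 * gl))).re) with hddef
      have hqd' : HasDerivAt q d 0 := hqd
      -- d ≤ 0 via one-sided slopes
      have hd0 : d ≤ 0 := by
        have hslope := hasDerivAt_iff_tendsto_slope.mp hqd'
        have hmono : nhdsWithin (0 : ℝ) (Set.Ioi 0) ≤ nhdsWithin (0 : ℝ) {(0 : ℝ)}ᶜ :=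
          nhdsWithin_mono 0 (fun x hx => ne_of_gt hx)
        have h2 : Filter.Tendsto (slope q 0) (nhdsWithin (0 : ℝ) (Set.Ioi 0)) (nhds d) :=
          hslope.mono_left hmono
        have hev : ∀ᶠ t in nhdsWithin (0 : ℝ) (Set.Ioi 0), slope q 0 t ≤ 0 := by
          filter_upwards [Ioc_mem_nhdsGT_of_mem (Set.mem_Ico.mpr ⟨le_refl 0, one_pos⟩)]
            with t ht
          rw [slope_def_field]
          rw [hq0, sub_zero, sub_zero]
          exact div_nonpos_iff.mpr (Or.inr ⟨hqle t ht, ht.1.le⟩)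
        exact le_of_tendsto h2 hev
      -- identify d with the real part of psi
      have hpsi : psi φ h z l = (gl - g0) / l + l * (starRingEnd ℂ) g0 := by
        rw [psi, dslope_of_ne _ hl0, slope_def_field, sub_zero]
      have hns : ((normSq l : ℝ) : ℂ) = (starRingEnd ℂ) l * l := by
        rw [mul_comm, Complex.mul_conj]
      have hcx : (starRingEnd ℂ) l * (gl - g0) + ((normSq l : ℝ) : ℂ) * (l * (starRingEnd ℂ) g0)
          = ((normSq l : ℝ) : ℂ) * psi φ h z l := by
        rw [hpsi, hns]
        field_simp
      have hre := congrArg Complex.re hcx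
      rw [Complex.add_re, Complex.re_ofReal_mul, Complex.re_ofReal_mul] at hre
      have hdeq : d = 2 * (normSq l * (psi φ h z l).re) := by
        rw [hddef, ← hre]
        simp only [map_zero, zero_mul, mul_zero, sub_zero, add_zero, map_one, one_mul,
          zero_sub, Complex.neg_re, mul_neg, map_sub]
        ring_nf
      have hnsq : 0 < normSq l := Complex.normSq_pos.mpr hl0
      nlinarith [hd0, hdeq, hnsq]
    intro l hl z hz
    rcases eq_or_ne l 0 with rfl | hl0
    · -- continuity argument at 0
      have hgAn : AnalyticOnNhd ℂ (fun w => dotn (h w) (z - φ w)) (ball (0 : ℂ) δ0) :=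
        (hgzOn z).analyticOnNhd isOpen_ball
      obtain ⟨p, hp⟩ := hgAn 0 h0δ
      have hcont : ContinuousAt (dslope (fun w => dotn (h w) (z - φ w)) 0) 0 :=
        hp.has_fpower_series_dslope_fslope.continuousAt
      have hpsicont : ContinuousAt (fun w => (psi φ h z w).re) 0 := by
        apply Complex.continuous_re.continuousAt.comp
        apply ContinuousAt.add hcont
        exact (continuous_id.mul continuous_const).continuousAt
      have htend : Filter.Tendsto (fun w => (psi φ h z w).re)
          (nhdsWithin (0 : ℂ) {(0 : ℂ)}ᶜ) (nhds ((psi φ h z 0).re)) :=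
        hpsicont.continuousWithinAt.tendsto
      have hev : ∀ᶠ w in nhdsWithin (0 : ℂ) {(0 : ℂ)}ᶜ, (psi φ h z w).re ≤ 0 := by
        filter_upwards [mem_nhdsWithin_of_mem_nhds (isOpen_ball.mem_nhds h0mem),
          self_mem_nhdsWithin] with w hw hw0
        exact main w hw hw0 z hz
      exact le_of_tendsto htend hev
    · exact main l hl hl0 z hz
end
end

section
/- Let f : D_unit → D_unit be a holomorphic self-map of the unit disc. Then for all λ in the unit disc, |f(λ)| − |λ| ≤ (2|f(0)|/(1 + |f(0)|)) · (1 − |λ|). -/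
open Complex Metric ComplexConjugate

lemma mobius_normSq_lt {b w : ℂ} (hb : ‖b‖ < 1) (hw : ‖w‖ < 1) :
    ‖w - b‖ < ‖1 - conj b * w‖ := by
  have hb2 : normSq b < 1 := by rw [← Complex.sq_norm] at *; nlinarith [norm_nonneg b]
  have hw2 : normSq w < 1 := by rw [← Complex.sq_norm] at *; nlinarith [norm_nonneg w]
  have key : normSq (w - b) < normSq (1 - conj b * w) := by
    simp only [Complex.normSq_apply, Complex.sub_re, Complex.sub_im, Complex.mul_re,
      Complex.mul_im, Complex.conj_re, Complex.conj_im, Complex.one_re, Complex.one_im] at *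
    nlinarith
  have := Real.sqrt_lt_sqrt (normSq_nonneg _) key
  simpa [Complex.norm_def] using this

set_option maxHeartbeats 1000000 in
/-- For a holomorphic self-map `f` of the unit disc,
`|f(λ)| - |λ| ≤ (2|f(0)|/(1+|f(0)|)) (1-|λ|)` for all `λ` in the unit disc. -/
theorem schwarz_pick_growth (f : ℂ → ℂ)
    (hf : DifferentiableOn ℂ f (ball (0 : ℂ) 1))
    (hmap : Set.MapsTo f (ball (0 : ℂ) 1) (ball (0 : ℂ) 1)) :
    ∀ l ∈ ball (0 : ℂ) 1,
      ‖f l‖ - ‖l‖ ≤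
        (2 * ‖f 0‖ / (1 + ‖f 0‖)) * (1 - ‖l‖) := by
  intro l hl
  have h0 : (0 : ℂ) ∈ ball (0 : ℂ) 1 := by simp
  set b := f 0 with hbdef
  have hb : ‖b‖ < 1 := by simpa using hmap h0
  have hfl : ‖f l‖ < 1 := by simpa using hmap hl
  have hl1 : ‖l‖ < 1 := by simpa using hl
  -- denominator nonzero on the ball
  have hden : ∀ z ∈ ball (0 : ℂ) 1, (1 - conj b * f z) ≠ 0 := by
    intro z hz h
    have hz1 : ‖f z‖ < 1 := by simpa using hmap hz
    have : ‖conj b * f z‖ < 1 := by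
      rw [norm_mul, Complex.norm_conj]
      nlinarith [norm_nonneg b, norm_nonneg (f z)]
    rw [← sub_eq_zero.mp h] at this
    simp at this
  set g : ℂ → ℂ := fun z => (f z - b) / (1 - conj b * f z) with hg
  have hgd : DifferentiableOn ℂ g (ball (0 : ℂ) 1) := by
    apply DifferentiableOn.div
    · exact hf.sub (differentiableOn_const b)
    · exact (differentiableOn_const 1).sub ((differentiableOn_const _).mul hf)
    · exact hden
  have hgmap : Set.MapsTo g (ball (0 : ℂ) 1) (ball (0 : ℂ) 1) := by
    intro z hz
    have hz1 : ‖f z‖ < 1 := by simpa using hmap hz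
    have := mobius_normSq_lt hb hz1
    rw [mem_ball_zero_iff]
    have hdpos : 0 < ‖1 - conj b * f z‖ := by
      rw [norm_pos_iff]; exact hden z hz
    rw [hg]
    simp only [norm_div]
    rw [div_lt_one hdpos]
    exact this
  have hg0 : g 0 = 0 := by simp [hg, hbdef]
  have hgle : ‖g l‖ ≤ ‖l‖ :=
    Complex.norm_le_norm_of_mapsTo_ball hgd (hgmap.mono_right ball_subset_closedBall) hg0 hl1
  -- Schwarz–Pick inequality
  have hsp : ‖f l - b‖ ≤ ‖l‖ * ‖1 - conj b * f l‖ := by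
    have hne := hden l hl
    have : f l - b = g l * (1 - conj b * f l) := by
      simp only [hg]
      rw [div_mul_cancel₀ _ hne]
    rw [this, norm_mul]
    exact mul_le_mul_of_nonneg_right hgle (norm_nonneg _)
  -- square it
  set a := ‖b‖ with ha
  set t := ‖l‖ with ht
  set x := ‖f l‖ with hx
  have ha0 : 0 ≤ a := norm_nonneg _
  have ht0 : 0 ≤ t := norm_nonneg _
  have hx0 : 0 ≤ x := norm_nonneg _
  have hsq : normSq (f l - b) ≤ t ^ 2 * normSq (1 - conj b * f l) := by
    have := mul_le_mul hsp hsp (norm_nonneg _) (by positivity)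
    calc normSq (f l - b) = ‖f l - b‖ * ‖f l - b‖ := by
          rw [← Complex.sq_norm]; ring
      _ ≤ (t * ‖1 - conj b * f l‖) * (t * ‖1 - conj b * f l‖) := this
      _ = t ^ 2 * normSq (1 - conj b * f l) := by rw [← Complex.sq_norm]; ring
  -- expand: normSq(w - b) = x² - 2 Re(b̄ w) + a², normSq(1 - b̄w) = 1 - 2Re(b̄w) + a²x²
  have hre : (conj b * f l).re ≤ a * x := by
    calc (conj b * f l).re ≤ ‖conj b * f l‖ := Complex.re_le_norm _
      _ = a * x := by rw [norm_mul, Complex.norm_conj]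
  have e1 : normSq (f l - b) = x ^ 2 - 2 * (conj b * f l).re + a ^ 2 := by
    rw [hx, ha, ← Complex.normSq_eq_norm_sq, ← Complex.normSq_eq_norm_sq]
    simp only [Complex.normSq_apply, Complex.sub_re, Complex.sub_im, Complex.mul_re,
      Complex.mul_im, Complex.conj_re, Complex.conj_im]
    ring
  have e2 : normSq (1 - conj b * f l) = 1 - 2 * (conj b * f l).re + a ^ 2 * x ^ 2 := by
    rw [hx, ha, ← Complex.normSq_eq_norm_sq, ← Complex.normSq_eq_norm_sq]
    simp only [Complex.normSq_apply, Complex.sub_re, Complex.sub_im, Complex.mul_re,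
      Complex.mul_im, Complex.conj_re, Complex.conj_im, Complex.one_re, Complex.one_im]
    ring
  rw [e1, e2] at hsq
  -- quadratic inequality ⟹ x(1+at) ≤ a+t
  set r := (conj b * f l).re with hr
  have ht2 : t ^ 2 < 1 := by nlinarith
  have hquad : x * (1 + a * t) ≤ a + t := by
    by_contra hcon
    push_neg at hcon
    have hat : a * t < 1 := by nlinarith
    have h2 : a - t < x * (1 - a * t) := by nlinarith [mul_nonneg ha0 ht0, sq_nonneg a]
    have hprod : 0 < (x * (1 + a * t) - (a + t)) * (x * (1 - a * t) - (a - t)) :=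
      mul_pos (by linarith) (by linarith)
    have hrx : 2 * (1 - t ^ 2) * r ≤ 2 * (1 - t ^ 2) * (a * x) := by
      apply mul_le_mul_of_nonneg_left hre
      nlinarith
    nlinarith [hsq, hprod, hrx]
  -- finish
  rw [div_mul_eq_mul_div, le_div_iff₀ (by linarith : (0:ℝ) < 1 + a)]
  nlinarith [hquad, mul_le_mul_of_nonneg_left hquad (by linarith : (0:ℝ) ≤ 1 + a),
    mul_nonneg (mul_nonneg ha0 (sq_nonneg (1 - t))) (by linarith : (0:ℝ) ≤ 1 - a),
    mul_nonneg ha0 ht0]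
end

section
/- Let D ∈ A_d^n, i.e., a convex domain in C^n containing no complex affine lines whose maximal real affine subspaces contained in D are translates of {0}^{n−d} × (iR)^d. Define W_D := {v ∈ C^n : sup_{z∈D} Re(z•v) < ∞} and S_D := {y ∈ R^d : (0,y)•v ≤ 0 for all v ∈ W_D}. Then for every z ∈ D, y ∈ S_D and x ∈ R^d, the point z + (0,y) + (0,ix) belongs to D. -/
open Complex Metric

noncomputable section

variable {m d : ℕ}

/-- `ℂ^{m+d}` modelled as `ℂ^m × ℂ^d`: the first `m` coordinates and the last `d` coordinates. -/
abbrev En (m d : ℕ) := (Fin m → ℂ) × (Fin d → ℂ)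

/-- The bilinear dot product on `ℂ^{m+d} = ℂ^m × ℂ^d`. -/
def dotE (z w : En m d) : ℂ := ∑ j, z.1 j * w.1 j + ∑ j, z.2 j * w.2 j

/-- The real subspace of directions `{0}^m × (iℝ)^d`. -/
def Sdir (m d : ℕ) : Set (En m d) := {v | v.1 = 0 ∧ ∀ j, (v.2 j).re = 0}

/-- `D` belongs to the family `𝒜_d^n` (with `n = m + d`): `D` is a convex domain in
`ℂ^m × ℂ^d` containing no complex affine lines, invariant under translations by
`{0}^m × (iℝ)^d`, and every real affine line contained in `D` has direction in
`{0}^m × (iℝ)^d` (so the maximal real affine subspaces contained in `D` are exactly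
the translates of `{0}^m × (iℝ)^d`). -/
def InA (D : Set (En m d)) : Prop :=
  IsOpen D ∧ D.Nonempty ∧ Convex ℝ D ∧
  (∀ z v : En m d, v ≠ 0 → ∃ t : ℂ, z + t • v ∉ D) ∧
  (∀ z ∈ D, ∀ x : Fin d → ℝ, (z.1, fun j => z.2 j + (x j : ℂ) * Complex.I) ∈ D) ∧
  (∀ z v : En m d, (∀ t : ℝ, z + t • v ∈ D) → v ∈ Sdir m d)

/-- The cone `W_D = {v : sup_{z ∈ D} Re (z • v) < ∞}`. -/
def WD (D : Set (En m d)) : Set (En m d) :=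
  {v | ∃ C : ℝ, ∀ z ∈ D, (dotE z v).re ≤ C}

/-- The cone `S_D = {y ∈ ℝ^d : (0,y) • v ≤ 0 for all v ∈ W_D}`. -/
def SD (D : Set (En m d)) : Set (Fin d → ℝ) :=
  {y | ∀ v ∈ WD D, (dotE ((0 : Fin m → ℂ), fun j => (y j : ℂ)) v).re ≤ 0}


lemma exists_repr (f : En m d →L[ℝ] ℝ) :
    ∃ v : En m d, ∀ w : En m d, f w = (dotE w v).re := by
  refine ⟨(fun j => (f (Pi.single j 1, 0) : ℂ) - (f (Pi.single j I, 0) : ℂ) * I,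
          fun j => (f (0, Pi.single j 1) : ℂ) - (f (0, Pi.single j I) : ℂ) * I), ?_⟩
  intro w
  have key1 : ∀ (c : ℂ) (j : Fin m),
      ((Pi.single j c : Fin m → ℂ), (0 : Fin d → ℂ))
        = c.re • ((Pi.single j 1 : Fin m → ℂ), (0 : Fin d → ℂ))
          + c.im • ((Pi.single j I : Fin m → ℂ), (0 : Fin d → ℂ)) := by
    intro c j
    refine Prod.ext ?_ (by simp)
    simp only [Prod.fst_add, Prod.smul_fst]
    rw [← Pi.single_smul, ← Pi.single_smul, ← Pi.single_add]
    simp [Complex.real_smul]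
  have key2 : ∀ (c : ℂ) (j : Fin d),
      ((0 : Fin m → ℂ), (Pi.single j c : Fin d → ℂ))
        = c.re • ((0 : Fin m → ℂ), (Pi.single j 1 : Fin d → ℂ))
          + c.im • ((0 : Fin m → ℂ), (Pi.single j I : Fin d → ℂ)) := by
    intro c j
    refine Prod.ext (by simp) ?_
    simp only [Prod.snd_add, Prod.smul_snd]
    rw [← Pi.single_smul, ← Pi.single_smul, ← Pi.single_add]
    simp [Complex.real_smul]
  have L1 : ∀ (c : ℂ) (j : Fin m),
      f ((Pi.single j c : Fin m → ℂ), (0 : Fin d → ℂ))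
        = c.re * f (Pi.single j 1, 0) + c.im * f (Pi.single j I, 0) := by
    intro c j; rw [key1 c j, map_add, map_smul, map_smul]; simp
  have L2 : ∀ (c : ℂ) (j : Fin d),
      f ((0 : Fin m → ℂ), (Pi.single j c : Fin d → ℂ))
        = c.re * f (0, Pi.single j 1) + c.im * f (0, Pi.single j I) := by
    intro c j; rw [key2 c j, map_add, map_smul, map_smul]; simp
  have hw : w = (∑ j, ((Pi.single j (w.1 j) : Fin m → ℂ), (0 : Fin d → ℂ)))
      + (∑ j, ((0 : Fin m → ℂ), (Pi.single j (w.2 j) : Fin d → ℂ))) := by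
    refine Prod.ext ?_ ?_ <;>
      simp [Prod.fst_sum, Prod.snd_sum, Finset.univ_sum_single]
  calc f w = ∑ j, f ((Pi.single j (w.1 j) : Fin m → ℂ), (0 : Fin d → ℂ))
      + ∑ j, f ((0 : Fin m → ℂ), (Pi.single j (w.2 j) : Fin d → ℂ)) := by
        conv_lhs => rw [hw]
        rw [map_add, map_sum, map_sum]
    _ = ∑ j, ((w.1 j).re * f (Pi.single j 1, 0) + (w.1 j).im * f (Pi.single j I, 0))
      + ∑ j, ((w.2 j).re * f (0, Pi.single j 1) + (w.2 j).im * f (0, Pi.single j I)) := by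
        rw [Finset.sum_congr rfl fun j _ => L1 (w.1 j) j,
            Finset.sum_congr rfl fun j _ => L2 (w.2 j) j]
    _ = (dotE w _).re := by
        simp only [dotE, Complex.add_re, Complex.re_sum]
        refine congrArg₂ (· + ·) ?_ ?_ <;>
        · refine Finset.sum_congr rfl fun j _ => ?_
          simp [Complex.mul_re]

lemma add_SD_mem {m d : ℕ} (D : Set (En m d)) (hO : IsOpen D) (hC : Convex ℝ D) :
    ∀ z ∈ D, ∀ y ∈ SD D, z + ((0 : Fin m → ℂ), fun j => (y j : ℂ)) ∈ D := by
  intro z hz y hy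
  set u : En m d := ((0 : Fin m → ℂ), fun j => (y j : ℂ)) with hu
  have hcl : z + (2:ℝ) • u ∈ closure D := by
    by_contra hnot
    obtain ⟨f, c, hfc, hcf⟩ :=
      geometric_hahn_banach_closed_point (hC.closure) isClosed_closure hnot
    obtain ⟨v, hv⟩ := exists_repr f
    have hvW : v ∈ WD D := ⟨c, fun w hw => by
      rw [← hv]; exact (hfc w (subset_closure hw)).le⟩
    have hyv := hy v hvW
    rw [← hv] at hyv
    have h1 : f (z + (2:ℝ) • u) = f z + 2 * f u := by
      simp [map_add, map_smul]
    have h2 : f z < c := hfc z (subset_closure hz)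
    rw [h1] at hcf
    linarith
  have hmid : z + u = (1/2 : ℝ) • z + (1/2 : ℝ) • (z + (2:ℝ) • u) := by
    module
  have := hC.combo_interior_closure_mem_interior
    (by rwa [hO.interior_eq]) hcl (by norm_num : (0:ℝ) < 1/2)
    (by norm_num : (0:ℝ) ≤ 1/2) (by norm_num)
  rw [hO.interior_eq] at this
  rwa [hmid]

/-- If `D ∈ 𝒜_d^n`, then `z + (0,y) + (0,ix) ∈ D` for every `z ∈ D`,
`y ∈ S_D` and `x ∈ ℝ^d`. -/
theorem mem_of_add_SD {m d : ℕ} (D : Set (En m d)) (hD : InA D) :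
    ∀ z ∈ D, ∀ y ∈ SD D, ∀ x : Fin d → ℝ,
      (z.1, fun j => z.2 j + (y j : ℂ) + (x j : ℂ) * Complex.I) ∈ D := by
  intro z hz y hy x
  have h1 := add_SD_mem D hD.1 hD.2.2.1 z hz y hy
  have h2 := hD.2.2.2.2.1 _ h1 x
  have heq : ((z + ((0 : Fin m → ℂ), fun j => (y j : ℂ))).1,
      fun j => (z + ((0 : Fin m → ℂ), fun j => (y j : ℂ))).2 j + (x j : ℂ) * Complex.I)
      = (z.1, fun j => z.2 j + (y j : ℂ) + (x j : ℂ) * Complex.I) := by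
    refine Prod.ext (by simp) ?_
    funext j
    simp
  rwa [heq] at h2
end
end

section
/- Let D ∈ A_d^n and W_D := {v ∈ C^n : sup_{z∈D} Re(z•v) < ∞}. Then W_D ⊂ C^{n−d} × R^d and the interior of W_D relative to C^{n−d} × R^d is non-empty. -/
open Complex Metric

noncomputable section

variable {m d : ℕ}

/- ## Auxiliary lemmas -/

lemma dotE_comm (z w : En m d) : dotE z w = dotE w z := by
  simp [dotE, mul_comm]

lemma dotE_neg_left (z w : En m d) : dotE (-z) w = -dotE z w := by
  simp only [dotE, Prod.fst_neg, Prod.snd_neg, Pi.neg_apply, neg_mul,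
    Finset.sum_neg_distrib]
  ring

lemma zero_mem_WD (D : Set (En m d)) : (0 : En m d) ∈ WD D :=
  ⟨0, fun z _ => by simp [dotE]⟩

lemma convex_WD (D : Set (En m d)) : Convex ℝ (WD D) := by
  rintro v ⟨C1, h1⟩ u ⟨C2, h2⟩ a b ha hb _
  refine ⟨a * C1 + b * C2, fun z hz => ?_⟩
  have hdot : dotE z (a • v + b • u) = (a : ℂ) * dotE z v + (b : ℂ) * dotE z u := by
    have h1 : ∑ j, z.1 j * (a • v + b • u).1 j
        = (a : ℂ) * ∑ j, z.1 j * v.1 j + (b : ℂ) * ∑ j, z.1 j * u.1 j := by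
      rw [Finset.mul_sum, Finset.mul_sum, ← Finset.sum_add_distrib]
      refine Finset.sum_congr rfl fun j _ => ?_
      simp only [Prod.fst_add, Prod.smul_fst, Pi.add_apply, Pi.smul_apply, Complex.real_smul]
      ring
    have h2 : ∑ j, z.2 j * (a • v + b • u).2 j
        = (a : ℂ) * ∑ j, z.2 j * v.2 j + (b : ℂ) * ∑ j, z.2 j * u.2 j := by
      rw [Finset.mul_sum, Finset.mul_sum, ← Finset.sum_add_distrib]
      refine Finset.sum_congr rfl fun j _ => ?_
      simp only [Prod.snd_add, Prod.smul_snd, Pi.add_apply, Pi.smul_apply, Complex.real_smul]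
      ring
    simp only [dotE, h1, h2]
    ring
  rw [hdot]
  have hre : ((a : ℂ) * dotE z v + (b : ℂ) * dotE z u).re
      = a * (dotE z v).re + b * (dotE z u).re := by
    simp [Complex.add_re, Complex.mul_re]
  rw [hre]
  gcongr
  · exact h1 z hz
  · exact h2 z hz

lemma WD_real (D : Set (En m d)) (hD : InA D) : ∀ v ∈ WD D, ∀ j, (v.2 j).im = 0 := by
  obtain ⟨-, ⟨z0, hz0⟩, -, -, htrans, -⟩ := hD
  rintro v ⟨C, hC⟩ j
  by_contra hj
  have hS : (0 : ℝ) < ∑ k, (v.2 k).im ^ 2 :=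
    Finset.sum_pos' (fun k _ => sq_nonneg _) ⟨j, Finset.mem_univ j, by positivity⟩
  set S := ∑ k, (v.2 k).im ^ 2 with hSdef
  set A := (dotE z0 v).re with hAdef
  have key : ∀ t : ℝ, A + t * S ≤ C := by
    intro t
    have hz := htrans z0 hz0 (fun k => -(t * (v.2 k).im))
    have hle := hC _ hz
    have hcomp : (dotE (z0.1, fun k => ((-(t * (v.2 k).im) : ℝ) : ℂ) * Complex.I + z0.2 k) v).re
        = A + t * S := by
      have hsplit : dotE (z0.1, fun k => ((-(t * (v.2 k).im) : ℝ) : ℂ) * Complex.I + z0.2 k) v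
          = dotE z0 v + ∑ k, ((-(t * (v.2 k).im) : ℝ) : ℂ) * Complex.I * v.2 k := by
        simp only [dotE]
        rw [add_right_comm, add_assoc, ← Finset.sum_add_distrib]
        congr 1
        exact Finset.sum_congr rfl fun k _ => by ring
      rw [hsplit, Complex.add_re, ← hAdef, Complex.re_sum]
      have : ∀ k, (((-(t * (v.2 k).im) : ℝ) : ℂ) * Complex.I * v.2 k).re
          = t * (v.2 k).im ^ 2 := by
        intro k
        simp [Complex.mul_re, Complex.mul_im]
        ring
      rw [Finset.sum_congr rfl fun k _ => this k, ← Finset.mul_sum, ← hSdef]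
    have heq : (z0.1, fun k => z0.2 k + ((-(t * (v.2 k).im) : ℝ) : ℂ) * Complex.I)
        = (z0.1, fun k => ((-(t * (v.2 k).im) : ℝ) : ℂ) * Complex.I + z0.2 k) := by
      refine Prod.ext rfl (funext fun k => ?_)
      ring
    rw [heq] at hle
    rw [hcomp] at hle
    exact hle
  have h1 := key ((C - A) / S + 1)
  rw [add_mul, div_mul_cancel₀ _ (ne_of_gt hS)] at h1
  nlinarith

/-- Every continuous real-linear functional on `En m d` is represented by the pairing
`a ↦ Re (dotE a w)`. -/
lemma exists_rep (f : En m d →L[ℝ] ℝ) : ∃ w : En m d, ∀ a, (dotE a w).re = f a := by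
  classical
  refine ⟨(fun j => ((f ((Pi.single j 1 : Fin m → ℂ), 0) : ℝ) : ℂ) -
            ((f ((Pi.single j Complex.I : Fin m → ℂ), 0) : ℝ) : ℂ) * Complex.I,
          fun j => ((f (0, (Pi.single j 1 : Fin d → ℂ)) : ℝ) : ℂ) -
            ((f (0, (Pi.single j Complex.I : Fin d → ℂ)) : ℝ) : ℂ) * Complex.I), fun a => ?_⟩
  have hsingle1 : ∀ (j : Fin m) (c : ℂ),
      ((Pi.single j c : Fin m → ℂ), (0 : Fin d → ℂ))
        = c.re • ((Pi.single j 1 : Fin m → ℂ), (0 : Fin d → ℂ))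
          + c.im • ((Pi.single j Complex.I : Fin m → ℂ), (0 : Fin d → ℂ)) := by
    intro j c
    refine Prod.ext (funext fun k => ?_) (by simp)
    by_cases hk : k = j
    · subst hk
      simp [Complex.real_smul, Complex.ext_iff]
    · simp [Pi.single_apply, hk]
  have hsingle2 : ∀ (j : Fin d) (c : ℂ),
      ((0 : Fin m → ℂ), (Pi.single j c : Fin d → ℂ))
        = c.re • ((0 : Fin m → ℂ), (Pi.single j 1 : Fin d → ℂ))
          + c.im • ((0 : Fin m → ℂ), (Pi.single j Complex.I : Fin d → ℂ)) := by
    intro j c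
    refine Prod.ext (by simp) (funext fun k => ?_)
    by_cases hk : k = j
    · subst hk
      simp [Complex.real_smul, Complex.ext_iff]
    · simp [Pi.single_apply, hk]
  have hf1 : ∀ (j : Fin m) (c : ℂ), f ((Pi.single j c : Fin m → ℂ), 0)
      = c.re * f ((Pi.single j 1 : Fin m → ℂ), 0)
        + c.im * f ((Pi.single j Complex.I : Fin m → ℂ), 0) := by
    intro j c
    rw [hsingle1 j c, map_add, map_smul, map_smul, smul_eq_mul, smul_eq_mul]
  have hf2 : ∀ (j : Fin d) (c : ℂ), f (0, (Pi.single j c : Fin d → ℂ))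
      = c.re * f (0, (Pi.single j 1 : Fin d → ℂ))
        + c.im * f (0, (Pi.single j Complex.I : Fin d → ℂ)) := by
    intro j c
    rw [hsingle2 j c, map_add, map_smul, map_smul, smul_eq_mul, smul_eq_mul]
  have hdecomp : a = (∑ j, ((Pi.single j (a.1 j) : Fin m → ℂ), (0 : Fin d → ℂ)))
      + ∑ j, ((0 : Fin m → ℂ), (Pi.single j (a.2 j) : Fin d → ℂ)) := by
    refine Prod.ext ?_ ?_
    · simp [Prod.fst_sum, Finset.univ_sum_single]
    · simp [Prod.snd_sum, Finset.univ_sum_single]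
  calc (dotE a _).re
      = ∑ j, (a.1 j * (((f ((Pi.single j 1 : Fin m → ℂ), 0) : ℝ) : ℂ) -
            ((f ((Pi.single j Complex.I : Fin m → ℂ), 0) : ℝ) : ℂ) * Complex.I)).re
        + ∑ j, (a.2 j * (((f (0, (Pi.single j 1 : Fin d → ℂ)) : ℝ) : ℂ) -
            ((f (0, (Pi.single j Complex.I : Fin d → ℂ)) : ℝ) : ℂ) * Complex.I)).re := by
        simp [dotE, Complex.re_sum]
    _ = ∑ j, ((a.1 j).re * f ((Pi.single j 1 : Fin m → ℂ), 0)
            + (a.1 j).im * f ((Pi.single j Complex.I : Fin m → ℂ), 0))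
        + ∑ j, ((a.2 j).re * f (0, (Pi.single j 1 : Fin d → ℂ))
            + (a.2 j).im * f (0, (Pi.single j Complex.I : Fin d → ℂ))) := by
        congr 1 <;> refine Finset.sum_congr rfl fun j _ => ?_ <;>
          · simp [Complex.mul_re, Complex.sub_re, Complex.sub_im, Complex.mul_im]
            try ring
    _ = ∑ j, f ((Pi.single j (a.1 j) : Fin m → ℂ), (0 : Fin d → ℂ))
        + ∑ j, f ((0 : Fin m → ℂ), (Pi.single j (a.2 j) : Fin d → ℂ)) := by
        congr 1 <;> refine Finset.sum_congr rfl fun j _ => ?_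
        · exact (hf1 j (a.1 j)).symm
        · exact (hf2 j (a.2 j)).symm
    _ = f a := by
        rw [← map_sum, ← map_sum, ← map_add]
        exact congrArg f hdecomp.symm

/-- If `Re (c • v) ≤ 0` for all `v ∈ W_D`, then `c` is a recession direction of `D`. -/
lemma recession_WD (D : Set (En m d)) (hD : InA D) (c : En m d)
    (hc : ∀ v ∈ WD D, (dotE c v).re ≤ 0) :
    ∀ z ∈ D, ∀ t : ℝ, 0 ≤ t → z + t • c ∈ D := by
  obtain ⟨hopen, -, hconv, -, -, -⟩ := hD
  intro z hz t ht
  by_contra hmem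
  obtain ⟨f, hf⟩ := geometric_hahn_banach_open_point hconv hopen hmem
  obtain ⟨w, hw⟩ := exists_rep f
  have hwW : w ∈ WD D := ⟨f (z + t • c), fun a ha => by rw [hw a]; exact (hf a ha).le⟩
  have hfc : f c ≤ 0 := by rw [← hw c]; rw [dotE_comm]; rw [dotE_comm w c]; exact hc w hwW
  have h1 : f (z + t • c) = f z + t * f c := by
    simp [map_add, map_smul]
  have h3 := hf z hz
  nlinarith

lemma span_WD (D : Set (En m d)) (hD : InA D) :
    ∀ x : En m d, (∀ j, (x.2 j).im = 0) → x ∈ Submodule.span ℝ (WD D) := by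
  intro x hx
  by_contra hxK
  set K := Submodule.span ℝ (WD D) with hK
  have hKclosed : IsClosed (K : Set (En m d)) := Submodule.closed_of_finiteDimensional K
  obtain ⟨f, u, hfu, hux⟩ := geometric_hahn_banach_closed_point K.convex hKclosed hxK
  have hu0 : 0 < u := by simpa using hfu 0 K.zero_mem
  have hf0 : ∀ k ∈ K, f k = 0 := by
    intro k hk
    by_contra hfk
    have h1 := hfu (((u + 1) / f k) • k) (K.smul_mem _ hk)
    rw [map_smul, smul_eq_mul, div_mul_cancel₀ _ hfk] at h1
    linarith
  obtain ⟨w, hw⟩ := exists_rep f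
  have hvw : ∀ v ∈ WD D, (dotE w v).re = 0 := by
    intro v hv
    rw [dotE_comm, hw v]
    exact hf0 v (Submodule.subset_span hv)
  have hrec1 : ∀ z ∈ D, ∀ t : ℝ, 0 ≤ t → z + t • w ∈ D :=
    recession_WD D hD w (fun v hv => le_of_eq (hvw v hv))
  have hrec2 : ∀ z ∈ D, ∀ t : ℝ, 0 ≤ t → z + t • (-w) ∈ D :=
    recession_WD D hD (-w) (fun v hv => by rw [dotE_neg_left, Complex.neg_re, hvw v hv, neg_zero])
  obtain ⟨-, ⟨z0, hz0⟩, -, -, -, hline⟩ := hD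
  have hSdir : w ∈ Sdir m d := by
    refine hline z0 w (fun t => ?_)
    rcases le_or_gt 0 t with h | h
    · exact hrec1 z0 hz0 t h
    · have := hrec2 z0 hz0 (-t) (by linarith)
      rwa [smul_neg, ← neg_smul, neg_neg] at this
  obtain ⟨hw1, hw2⟩ := hSdir
  have hfx : f x = 0 := by
    rw [← hw x]
    have h1 : ∀ j, (x.1 j * w.1 j).re = 0 := fun j => by rw [hw1]; simp
    have h2 : ∀ j, (x.2 j * w.2 j).re = 0 := fun j => by
      rw [Complex.mul_re, hw2 j, hx j]; ring
    simp [dotE, Complex.re_sum, h1, h2]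
  linarith

/-- If `D ∈ 𝒜_d^n`, then `W_D ⊂ ℂ^{n-d} × ℝ^d` and the interior of `W_D`
relative to `ℂ^{n-d} × ℝ^d` is non-empty. -/
theorem WD_subset_and_rel_interior {m d : ℕ} (D : Set (En m d)) (hD : InA D) :
    (∀ v ∈ WD D, ∀ j, (v.2 j).im = 0) ∧
    ∃ v ∈ WD D, ∃ ε > (0 : ℝ), ∀ w : En m d,
      (∀ j, (w.2 j).im = 0) → dist w v < ε → w ∈ WD D := by
  refine ⟨WD_real D hD, ?_⟩
  have h0 : (0 : En m d) ∈ WD D := zero_mem_WD D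
  obtain ⟨v, hv⟩ := Set.Nonempty.intrinsicInterior (convex_WD D) ⟨0, h0⟩
  obtain ⟨y, hy, rfl⟩ := hv
  have hyW := interior_subset hy
  refine ⟨(y : En m d), hyW, ?_⟩
  rw [mem_interior_iff_mem_nhds, Metric.mem_nhds_iff] at hy
  obtain ⟨ε, hε, hball⟩ := hy
  refine ⟨ε, hε, fun w hwreal hdist => ?_⟩
  have hwspan : w ∈ affineSpan ℝ (WD D) := by
    have hdir : w ∈ (affineSpan ℝ (WD D)).direction := by
      rw [direction_affineSpan]
      have hwle : w ∈ Submodule.span ℝ (WD D) := span_WD D hD w hwreal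
      have hle : Submodule.span ℝ (WD D) ≤ vectorSpan ℝ (WD D) := by
        refine Submodule.span_le.2 (fun v hv => ?_)
        have := vsub_mem_vectorSpan ℝ hv h0
        simpa using this
      exact hle hwle
    have := AffineSubspace.vadd_mem_of_mem_direction hdir (mem_affineSpan ℝ h0)
    simpa using this
  have : (⟨w, hwspan⟩ : affineSpan ℝ (WD D)) ∈ ball y ε := by
    rw [mem_ball, Subtype.dist_eq]
    exact hdist
  exact hball this
end
end

section
/- Let D ∈ A_d^n and v ∈ C^{n−d} × R^d, and define P_D(v) := {p ∈ (C^{n−d} × R^d) ∩ closure(D) : Re((z − p)•v) < 0 for all z ∈ D}. Then P_D(v) is a closed convex subset of the boundary ∂D, and if P_D(v) is non-empty then v ∈ W_D := {w ∈ C^n : sup_{z∈D} Re(z•w) < ∞}. -/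
open Complex Metric

noncomputable section

variable {m d : ℕ}

/-- The set `P_D(v) = {p ∈ (ℂ^{n-d} × ℝ^d) ∩ closure D : Re((z - p) • v) < 0 for all z ∈ D}`. -/
def PD (D : Set (En m d)) (v : En m d) : Set (En m d) :=
  {p | (∀ j, (p.2 j).im = 0) ∧ p ∈ closure D ∧ ∀ z ∈ D, (dotE (z - p) v).re < 0}

lemma dotE_sub (z p v : En m d) : dotE (z - p) v = dotE z v - dotE p v := by
  simp [dotE, sub_mul, Finset.sum_sub_distrib]; ring

lemma dotE_add (z p v : En m d) : dotE (z + p) v = dotE z v + dotE p v := by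
  simp [dotE, add_mul, Finset.sum_add_distrib]; ring

lemma dotE_smul (r : ℝ) (z v : En m d) : dotE (r • z) v = (r : ℂ) * dotE z v := by
  simp [dotE, Finset.mul_sum, mul_add, Complex.real_smul, mul_assoc]

lemma dotE_zero (v : En m d) : dotE (0 : En m d) v = 0 := by simp [dotE]

lemma dotE_cont (v : En m d) : Continuous fun p : En m d => (dotE p v).re := by
  unfold dotE; fun_prop


/-- For `D ∈ 𝒜_d^n` and `v ∈ ℂ^{n-d} × ℝ^d`, the set `P_D(v)` is a closed
convex subset of `∂D`, and if it is non-empty then `v ∈ W_D`. -/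
theorem PD_closed_convex_subset_boundary {m d : ℕ} (D : Set (En m d)) (hD : InA D)
    (v : En m d) (hv : ∀ j, (v.2 j).im = 0) :
    IsClosed (PD D v) ∧ Convex ℝ (PD D v) ∧ PD D v ⊆ frontier D ∧
      ((PD D v).Nonempty → v ∈ WD D) := by
  obtain ⟨hop, ⟨z₀, hz₀⟩, hconv, -, -, -⟩ := hD
  refine ⟨?_, ?_, ?_, ?_⟩
  · -- closedness
    by_cases hL : ∀ u : En m d, (dotE u v).re = 0
    · have : PD D v = ∅ := by
        ext p
        simp only [Set.mem_empty_iff_false, iff_false]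
        rintro ⟨-, -, h⟩
        have := h z₀ hz₀
        rw [hL (z₀ - p)] at this
        exact lt_irrefl _ this
      rw [this]; exact isClosed_empty
    · push_neg at hL
      obtain ⟨u, hu⟩ := hL
      -- normalize so that (dotE u v).re > 0
      obtain ⟨u, hu⟩ : ∃ u : En m d, 0 < (dotE u v).re := by
        rcases hu.lt_or_gt with h | h
        · refine ⟨-u, ?_⟩
          have : dotE (-u) v = -(dotE u v) := by
            have := dotE_sub 0 u v
            simpa [dotE_zero] using this
          rw [this]; simpa using h
        · exact ⟨u, h⟩
      have hune : u ≠ 0 := by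
        rintro rfl; rw [dotE_zero] at hu; simp at hu
      have key : PD D v = {p : En m d | ∀ j, (p.2 j).im = 0} ∩ closure D ∩
          {p : En m d | ∀ z ∈ D, (dotE z v).re - (dotE p v).re ≤ 0} := by
        ext p
        constructor
        · rintro ⟨h1, h2, h3⟩
          refine ⟨⟨h1, h2⟩, fun z hz => ?_⟩
          have := h3 z hz
          rw [dotE_sub] at this
          simp only [Complex.sub_re] at this
          linarith
        · rintro ⟨⟨h1, h2⟩, h3⟩
          refine ⟨h1, h2, fun z hz => ?_⟩
          rw [dotE_sub, Complex.sub_re]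
          rcases lt_or_eq_of_le (h3 z hz) with h | h
          · linarith
          · exfalso
            obtain ⟨ε, hε, hball⟩ := Metric.isOpen_iff.mp hop z hz
            set r : ℝ := ε / (2 * ‖u‖) with hr
            have hnu : 0 < ‖u‖ := norm_pos_iff.mpr hune
            have hrpos : 0 < r := by positivity
            have hz' : z + r • u ∈ D := by
              apply hball
              rw [Metric.mem_ball, dist_eq_norm]
              have : z + r • u - z = r • u := by abel
              have heq : ε / (2 * ‖u‖) * ‖u‖ = ε / 2 := by
                field_simp
              rw [this, norm_smul, Real.norm_eq_abs, abs_of_pos hrpos, hr, heq]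
              linarith
            have := h3 _ hz'
            rw [dotE_add, dotE_smul] at this
            simp only [Complex.add_re, Complex.re_ofReal_mul] at this
            nlinarith
      rw [key]
      refine IsClosed.inter (IsClosed.inter ?_ isClosed_closure) ?_
      · have : {p : En m d | ∀ j, (p.2 j).im = 0} = ⋂ j, {p : En m d | (p.2 j).im = 0} := by
          ext p; simp
        rw [this]
        refine isClosed_iInter fun j => isClosed_eq ?_ continuous_const
        fun_prop
      · have : {p : En m d | ∀ z ∈ D, (dotE z v).re - (dotE p v).re ≤ 0} =
            ⋂ z ∈ D, {p : En m d | (dotE z v).re - (dotE p v).re ≤ 0} := by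
          ext p; simp
        rw [this]
        refine isClosed_iInter fun z => isClosed_iInter fun _ =>
          isClosed_le (by have := dotE_cont (m := m) (d := d) v; fun_prop) continuous_const
  · -- convexity
    rintro p ⟨hp1, hp2, hp3⟩ q ⟨hq1, hq2, hq3⟩ a b ha hb hab
    refine ⟨fun j => ?_, ?_, fun z hz => ?_⟩
    · have : ((a • p + b • q).2 j) = a • p.2 j + b • q.2 j := rfl
      rw [this]
      simp [Complex.smul_im, hp1 j, hq1 j]
    · exact hconv.closure hp2 hq2 ha hb hab
    · have hzd : z - (a • p + b • q) = a • (z - p) + b • (z - q) := by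
        match_scalars <;> linarith
      rw [hzd, dotE_add, dotE_smul, dotE_smul]
      simp only [Complex.add_re, Complex.re_ofReal_mul]
      have h1 := hp3 z hz
      have h2 := hq3 z hz
      rcases eq_or_lt_of_le ha with h | h
      · have : b = 1 := by linarith
        rw [← h, this]; simpa using h2
      · have : a * (dotE (z - p) v).re < 0 := mul_neg_of_pos_of_neg h h1
        have : b * (dotE (z - q) v).re ≤ 0 := mul_nonpos_of_nonneg_of_nonpos hb h2.le
        nlinarith
  · -- frontier
    rintro p ⟨hp1, hp2, hp3⟩
    rw [frontier, hop.interior_eq]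
    refine ⟨hp2, fun hpD => ?_⟩
    have := hp3 p hpD
    rw [sub_self, dotE_zero] at this
    simp at this
  · -- nonempty → WD
    rintro ⟨p, hp1, hp2, hp3⟩
    refine ⟨(dotE p v).re, fun z hz => ?_⟩
    have := hp3 z hz
    rw [dotE_sub, Complex.sub_re] at this
    linarith
end
end
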